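/- arXiv:1712.05372 — 9 statements merged into one kernel-verified Lean document; each statement's English description precedes it below -/
import Mathlib

section
/- Let b be continuous with 0 < b_min ≤ b ≤ b_max, μ > -liminf_{a→∞} b(a), and suppose ∫₀^∞ exp(-∫₀ˢ (μ+b(u))du) ds < ∞. Then lim_{s→∞} exp(-∫₀ˢ (μ + b(u)) du) = 0 and, for all a ≥ 0, e^{∫₀ᵃ(μ+b)} ∫_a^∞ b(s) e^{-∫₀ˢ(μ+b)} ds = 1 - μ ∫_a^∞ e^{-∫_a^s (μ+b(u))du} ds. -/
open MeasureTheory Real Set Filter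

/-- Integration-by-parts identity for the per-layer dual eigenfunction:
`exp(-∫₀ˢ(μ+b)) → 0` as `s → ∞`, and
`e^{∫₀ᵃ(μ+b)} ∫_a^∞ b(s) e^{-∫₀ˢ(μ+b)} ds = 1 - μ ∫_a^∞ e^{-∫_a^s(μ+b)} ds`. -/
theorem stmt_6 (b : ℝ → ℝ) (bmin bmax : ℝ) (hb : Continuous b)
    (hmin : 0 < bmin) (hbd : ∀ a : ℝ, 0 ≤ a → bmin ≤ b a ∧ b a ≤ bmax)
    (μ : ℝ) (hμ : -Filter.liminf b Filter.atTop < μ)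
    (hint : MeasureTheory.IntegrableOn
      (fun s => Real.exp (-(∫ u in (0:ℝ)..s, (μ + b u)))) (Set.Ioi (0:ℝ))) :
    Filter.Tendsto (fun s => Real.exp (-(∫ u in (0:ℝ)..s, (μ + b u))))
      Filter.atTop (nhds 0) ∧
    ∀ a : ℝ, 0 ≤ a →
      Real.exp (∫ u in (0:ℝ)..a, (μ + b u)) *
        (∫ s in Set.Ioi a, b s * Real.exp (-(∫ u in (0:ℝ)..s, (μ + b u))))
      = 1 - μ * ∫ s in Set.Ioi a, Real.exp (-(∫ u in a..s, (μ + b u))) := by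
  have hcont : Continuous fun u => μ + b u := continuous_const.add hb
  set F : ℝ → ℝ := fun t => ∫ u in (0:ℝ)..t, (μ + b u) with hFdef
  have hF : ∀ s : ℝ, HasDerivAt F (μ + b s) s := fun s =>
    intervalIntegral.integral_hasDerivAt_right (hcont.intervalIntegrable _ _)
      (hcont.stronglyMeasurableAtFilter _ _) hcont.continuousAt
  have hcF : Continuous F := continuous_iff_continuousAt.2 fun s => (hF s).continuousAt
  have hconte : Continuous fun s => Real.exp (-F s) := Real.continuous_exp.comp hcF.neg
  have hg : ∀ s : ℝ, HasDerivAt (fun t => Real.exp (-F t)) (Real.exp (-F s) * (-(μ + b s))) s :=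
    fun s => ((hF s).neg).exp
  -- liminf bound
  set L := Filter.liminf b Filter.atTop with hL
  have hbdd : Filter.IsBoundedUnder (· ≥ ·) Filter.atTop b :=
    ⟨bmin, eventually_map.2 <| eventually_atTop.2 ⟨0, fun x hx => (hbd x hx).1⟩⟩
  have hev : ∀ᶠ s in atTop, (-μ + L) / 2 < b s :=
    Filter.eventually_lt_of_lt_liminf (by linarith) hbdd
  obtain ⟨s₀, hs₀⟩ := eventually_atTop.1 (hev.and (eventually_ge_atTop (0 : ℝ)))
  set c : ℝ := (μ + L) / 2 with hc
  have hcpos : 0 < c := by rw [hc]; linarith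
  have hFbound : ∀ s, s₀ ≤ s → F s₀ + c * (s - s₀) ≤ F s := by
    intro s hs
    have hadd : F s₀ + ∫ u in s₀..s, (μ + b u) = F s :=
      intervalIntegral.integral_add_adjacent_intervals (hcont.intervalIntegrable 0 s₀)
        (hcont.intervalIntegrable s₀ s)
    have hmono : (∫ u in s₀..s, c) ≤ ∫ u in s₀..s, (μ + b u) := by
      apply intervalIntegral.integral_mono_on hs intervalIntegrable_const
        (hcont.intervalIntegrable _ _)
      intro u hu
      have := (hs₀ u hu.1).1
      rw [hc]; linarith
    rw [intervalIntegral.integral_const, smul_eq_mul] at hmono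
    linarith
  have htend : Filter.Tendsto (fun s => Real.exp (-F s)) Filter.atTop (nhds 0) := by
    have hneg : Filter.Tendsto (fun s : ℝ => (-F s₀ + c * s₀) + -c * s) Filter.atTop Filter.atBot := by
      apply Filter.tendsto_atBot_add_const_left
      exact Filter.Tendsto.const_mul_atTop_of_neg (by linarith) tendsto_id
    have hlim : Filter.Tendsto (fun s : ℝ => Real.exp ((-F s₀ + c * s₀) + -c * s))
        Filter.atTop (nhds 0) := Real.tendsto_exp_atBot.comp hneg
    apply squeeze_zero' (Filter.Eventually.of_forall fun s => (Real.exp_pos _).le) _ hlim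
    filter_upwards [eventually_ge_atTop s₀] with s hs
    have := hFbound s hs
    exact Real.exp_le_exp.2 (by linarith)
  refine ⟨htend, fun a ha => ?_⟩
  -- integrability on Ioi a
  have hIg : IntegrableOn (fun s => Real.exp (-F s)) (Set.Ioi a) := by
    have : IntegrableOn (fun s => Real.exp (-F s)) (Set.Ioi 0) := by
      simpa using hint
    exact this.mono_set (Set.Ioi_subset_Ioi ha)
  have hIbg : IntegrableOn (fun s => b s * Real.exp (-F s)) (Set.Ioi a) := by
    refine Integrable.mono (hIg.const_mul bmax) ((hb.mul hconte).aestronglyMeasurable) ?_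
    rw [MeasureTheory.ae_restrict_iff' measurableSet_Ioi]
    refine Filter.Eventually.of_forall fun s hs => ?_
    have hs0 : (0:ℝ) ≤ s := le_of_lt (lt_of_le_of_lt ha hs)
    obtain ⟨h1, h2⟩ := hbd s hs0
    have hbpos : 0 ≤ b s := le_trans hmin.le h1
    have he : 0 < Real.exp (-F s) := Real.exp_pos _
    simp only [norm_mul, Real.norm_eq_abs, abs_of_nonneg hbpos, abs_of_pos he]
    have : 0 ≤ bmax := le_trans hbpos h2
    rw [abs_of_nonneg this]
    exact mul_le_mul_of_nonneg_right h2 he.le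
  -- FTC on [a,T]
  have ftc : ∀ T : ℝ, ∫ s in a..T, Real.exp (-F s) * (-(μ + b s))
      = Real.exp (-F T) - Real.exp (-F a) := fun T =>
    intervalIntegral.integral_eq_sub_of_hasDerivAt (fun x _ => hg x)
      ((hconte.mul hcont.neg).intervalIntegrable _ _)
  have hsplit : ∀ T : ℝ, (∫ s in a..T, b s * Real.exp (-F s))
      = (Real.exp (-F a) - Real.exp (-F T)) - μ * ∫ s in a..T, Real.exp (-F s) := by
    intro T
    have h1 : (fun s => b s * Real.exp (-F s))
        = fun s => (-(Real.exp (-F s) * (-(μ + b s)))) - μ * Real.exp (-F s) := by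
      funext s; ring
    rw [h1, intervalIntegral.integral_sub (f := fun s => -(Real.exp (-F s) * (-(μ + b s))))
      (g := fun s => μ * Real.exp (-F s)) ((hconte.mul hcont.neg).neg.intervalIntegrable _ _)
      ((continuous_const.mul hconte).intervalIntegrable _ _),
      intervalIntegral.integral_neg, ftc, intervalIntegral.integral_const_mul]
    ring
  -- take T → ∞
  have hlim1 : Filter.Tendsto (fun T => ∫ s in a..T, b s * Real.exp (-F s)) Filter.atTop
      (nhds (∫ s in Set.Ioi a, b s * Real.exp (-F s))) :=
    MeasureTheory.intervalIntegral_tendsto_integral_Ioi a hIbg tendsto_id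
  have hlim2 : Filter.Tendsto (fun T => (Real.exp (-F a) - Real.exp (-F T))
      - μ * ∫ s in a..T, Real.exp (-F s)) Filter.atTop
      (nhds ((Real.exp (-F a) - 0) - μ * ∫ s in Set.Ioi a, Real.exp (-F s))) :=
    ((tendsto_const_nhds.sub htend).sub
      ((MeasureTheory.intervalIntegral_tendsto_integral_Ioi a hIg tendsto_id).const_mul μ))
  have heq : (∫ s in Set.Ioi a, b s * Real.exp (-F s))
      = Real.exp (-F a) - μ * ∫ s in Set.Ioi a, Real.exp (-F s) := by
    have := tendsto_nhds_unique (hlim1.congr fun T => (hsplit T)) hlim2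
    linarith [this]
  -- rewrite RHS integral
  have hAdd : ∀ s : ℝ, (∫ u in a..s, (μ + b u)) = F s - F a := by
    intro s
    have h : (∫ u in (0:ℝ)..a, (μ + b u)) + (∫ u in a..s, (μ + b u))
        = ∫ u in (0:ℝ)..s, (μ + b u) :=
      intervalIntegral.integral_add_adjacent_intervals (hcont.intervalIntegrable 0 a)
        (hcont.intervalIntegrable a s)
    simp only [hFdef]
    linarith
  have hrhs : (∫ s in Set.Ioi a, Real.exp (-(∫ u in a..s, (μ + b u))))
      = Real.exp (F a) * ∫ s in Set.Ioi a, Real.exp (-F s) := by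
    have h1 : ∀ s ∈ Set.Ioi a, Real.exp (-(∫ u in a..s, (μ + b u)))
        = Real.exp (F a) * Real.exp (-F s) := by
      intro s _
      rw [hAdd s, show -(F s - F a) = F a + -F s by ring, Real.exp_add]
    rw [MeasureTheory.setIntegral_congr_fun measurableSet_Ioi h1,
      MeasureTheory.integral_const_mul]
  calc Real.exp (∫ u in (0:ℝ)..a, (μ + b u)) *
        (∫ s in Set.Ioi a, b s * Real.exp (-(∫ u in (0:ℝ)..s, (μ + b u))))
      = Real.exp (F a) * (Real.exp (-F a) - μ * ∫ s in Set.Ioi a, Real.exp (-F s)) := by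
        rw [← heq]
    _ = 1 - μ * (Real.exp (F a) * ∫ s in Set.Ioi a, Real.exp (-F s)) := by
        rw [mul_sub, ← Real.exp_add, add_neg_cancel, Real.exp_zero]; ring
    _ = 1 - μ * ∫ s in Set.Ioi a, Real.exp (-(∫ u in a..s, (μ + b u))) := by rw [← hrhs]
end

section
/- Let μ < 0, b continuous with b_min ≤ b ≤ b_max, and suppose there exist A > 0 and ε > 0 such that μ + b(a) > ε for all a ≥ A. Then the function a ↦ ∫_a^∞ b(s) exp(-∫_a^s (μ + b(u)) du) ds is bounded on [0,∞), with bound 1 + |μ|/ε for a ≥ A. -/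
open MeasureTheory Real Set Filter Topology

/-- Boundedness of the per-layer dual eigenfunction for negative intrinsic
growth rate: if `μ < 0` and `μ + b(a) > ε` for `a ≥ A`, then
`a ↦ ∫_a^∞ b(s) exp(-∫_a^s (μ + b(u)) du) ds` is bounded on `[0,∞)`, with
bound `1 + |μ|/ε` for `a ≥ A`. -/
theorem stmt_7 (b : ℝ → ℝ) (bmin bmax : ℝ) (hb : Continuous b)
    (hbd : ∀ a : ℝ, 0 ≤ a → bmin ≤ b a ∧ b a ≤ bmax)
    (μ A ε : ℝ) (hμ : μ < 0) (hA : 0 < A) (hε : 0 < ε)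
    (htail : ∀ a : ℝ, A ≤ a → ε < μ + b a) :
    (∃ C : ℝ, ∀ a : ℝ, 0 ≤ a →
      |∫ s in Set.Ioi a, b s * Real.exp (-(∫ u in a..s, (μ + b u)))| ≤ C) ∧
    (∀ a : ℝ, A ≤ a →
      (∫ s in Set.Ioi a, b s * Real.exp (-(∫ u in a..s, (μ + b u))))
        ≤ 1 + |μ| / ε) := by
  have hcont : Continuous (fun u : ℝ => μ + b u) := continuous_const.add hb
  set G : ℝ → ℝ := fun s => ∫ u in (0:ℝ)..s, (μ + b u) with hGdef
  have hGd : ∀ s : ℝ, HasDerivAt G (μ + b s) s := fun s =>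
    intervalIntegral.integral_hasDerivAt_right (hcont.intervalIntegrable _ _)
      (hcont.stronglyMeasurableAtFilter _ _) hcont.continuousAt
  have hGc : Continuous G := continuous_iff_continuousAt.2 fun x => (hGd x).continuousAt
  have hrw : ∀ a s : ℝ, (∫ u in a..s, (μ + b u)) = G s - G a := fun a s =>
    (intervalIntegral.integral_interval_sub_left (hcont.intervalIntegrable 0 s)
      (hcont.intervalIntegrable 0 a)).symm
  -- monotonicity helper
  have mono_aux : ∀ (c A' : ℝ), (∀ x : ℝ, A' ≤ x → c ≤ μ + b x) →
      ∀ t s : ℝ, A' ≤ t → t ≤ s → c * (s - t) ≤ G s - G t := by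
    intro c A' hle t s hA't hts
    set φ : ℝ → ℝ := fun y => G y - c * y with hφ
    have hd : ∀ x : ℝ, HasDerivAt φ (μ + b x - c) x := fun x => by
      simpa [hφ, Pi.sub_def] using (hGd x).sub ((hasDerivAt_id x).const_mul c)
    have hφc : Continuous φ := by
      apply hGc.sub
      exact continuous_const.mul continuous_id
    have hmono : MonotoneOn φ (Ici A') := by
      apply monotoneOn_of_deriv_nonneg (convex_Ici A') hφc.continuousOn
        (fun x _ => (hd x).differentiableAt.differentiableWithinAt)
      intro x hx
      rw [interior_Ici] at hx
      rw [(hd x).deriv]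
      have := hle x (le_of_lt hx)
      linarith
    have h := hmono (show t ∈ Ici A' from hA't) (show s ∈ Ici A' from le_trans hA't hts) hts
    simp only [hφ] at h
    linarith
  have key1 : ∀ t s : ℝ, A ≤ t → t ≤ s → ε * (s - t) ≤ G s - G t :=
    mono_aux ε A (fun x hx => (htail x hx).le)
  have key2 : ∀ t s : ℝ, 0 ≤ t → t ≤ s → (μ + bmin) * (s - t) ≤ G s - G t :=
    mono_aux (μ + bmin) 0 (fun x hx => by linarith [(hbd x hx).1])
  set m : ℝ := μ + bmin with hm
  set K : ℝ := Real.exp (|m| * A + ε * A) with hK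
  -- uniform exponential domination
  have hexp : ∀ a s : ℝ, 0 ≤ a → a ≤ s →
      Real.exp (-(G s - G a)) ≤ K * Real.exp (-(ε * (s - a))) := by
    intro a s ha has
    rw [hK, ← Real.exp_add]
    apply Real.exp_le_exp.2
    have habs : 0 ≤ |m| := abs_nonneg m
    rcases le_or_gt A a with hAa | haA
    · have := key1 a s hAa has
      nlinarith
    · rcases le_or_gt s A with hsA | hAs
      · have h2 := key2 a s ha has
        have h3 : m * (s - a) ≥ -|m| * (s - a) := by
          apply mul_le_mul_of_nonneg_right (neg_abs_le m) (by linarith)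
        have h4 : -|m| * (s - a) ≥ -|m| * A := by
          have : s - a ≤ A := by linarith
          nlinarith
        nlinarith
      · have h1 := key1 A s (le_refl A) hAs.le
        have h2 := key2 a A ha haA.le
        have h3 : m * (A - a) ≥ -|m| * (A - a) := by
          apply mul_le_mul_of_nonneg_right (neg_abs_le m) (by linarith)
        have h4 : -|m| * (A - a) ≥ -|m| * A := by nlinarith
        nlinarith
  -- integral of the dominating exponential
  have hIexp : ∀ a : ℝ, IntegrableOn (fun s => Real.exp (-(ε * (s - a)))) (Ioi a) ∧
      (∫ s in Ioi a, Real.exp (-(ε * (s - a)))) = 1 / ε := by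
    intro a
    have hgd : ∀ x ∈ Ici a, HasDerivAt (fun s => -(1/ε) * Real.exp (-(ε * (s - a))))
        (Real.exp (-(ε * (x - a)))) x := by
      intro x _
      have h1 : HasDerivAt (fun s : ℝ => -(ε * (s - a))) (-ε) x := by
        simpa [Pi.neg_def] using (((hasDerivAt_id x).sub_const a).const_mul ε).neg
      have h3 := h1.exp.const_mul (-(1/ε))
      refine h3.congr_deriv ?_
      field_simp
    have hpos : ∀ x ∈ Ioi a, (0:ℝ) ≤ Real.exp (-(ε * (x - a))) := fun x _ => (Real.exp_pos _).le
    have hT : Tendsto (fun s : ℝ => ε * (s - a)) atTop atTop := by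
      apply Tendsto.const_mul_atTop hε
      simpa [sub_eq_add_neg] using tendsto_atTop_add_const_right atTop (-a) tendsto_id
    have hTe : Tendsto (fun s : ℝ => Real.exp (-(ε * (s - a)))) atTop (𝓝 0) :=
      Real.tendsto_exp_neg_atTop_nhds_zero.comp hT
    have htend : Tendsto (fun s : ℝ => -(1/ε) * Real.exp (-(ε * (s - a)))) atTop (𝓝 0) := by
      simpa using hTe.const_mul (-(1/ε))
    refine ⟨integrableOn_Ioi_deriv_of_nonneg' hgd hpos htend, ?_⟩
    rw [integral_Ioi_of_hasDerivAt_of_nonneg' hgd hpos htend]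
    simp
  set M : ℝ := max |bmin| |bmax| with hM
  have hM0 : 0 ≤ M := le_trans (abs_nonneg _) (le_max_left _ _)
  have hMb : ∀ s : ℝ, 0 ≤ s → |b s| ≤ M := by
    intro s hs
    obtain ⟨h1, h2⟩ := hbd s hs
    rw [abs_le]
    constructor
    · have := neg_abs_le bmin
      have := le_max_left |bmin| |bmax|
      linarith
    · have := le_abs_self bmax
      have := le_max_right |bmin| |bmax|
      linarith
  have hK0 : 0 < K := Real.exp_pos _
  have hcont2 : ∀ a : ℝ, Continuous (fun s => b s * Real.exp (-(G s - G a))) := fun a =>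
    hb.mul (Real.continuous_exp.comp ((hGc.sub continuous_const).neg))
  constructor
  · -- global bound
    refine ⟨M * K * (1/ε), ?_⟩
    intro a ha
    simp only [hrw]
    have hbound : ∀ s ∈ Ioi a, |b s * Real.exp (-(G s - G a))|
        ≤ M * K * Real.exp (-(ε * (s - a))) := by
      intro s hs
      have hs' : a < s := hs
      rw [abs_mul, abs_of_pos (Real.exp_pos _)]
      calc |b s| * Real.exp (-(G s - G a))
          ≤ M * (K * Real.exp (-(ε * (s - a)))) := by
            apply mul_le_mul (hMb s (le_trans ha hs'.le)) (hexp a s ha hs'.le)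
              (Real.exp_pos _).le hM0
        _ = M * K * Real.exp (-(ε * (s - a))) := by ring
    have hgint : IntegrableOn (fun s => M * K * Real.exp (-(ε * (s - a)))) (Ioi a) :=
      ((hIexp a).1.const_mul (M * K))
    calc |∫ s in Ioi a, b s * Real.exp (-(G s - G a))|
        ≤ ∫ s in Ioi a, M * K * Real.exp (-(ε * (s - a))) := by
          rw [← Real.norm_eq_abs]
          apply norm_integral_le_of_norm_le hgint
          exact ae_restrict_of_forall_mem measurableSet_Ioi
            (fun s hs => by rw [Real.norm_eq_abs]; exact hbound s hs)
      _ = M * K * (1/ε) := by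
          rw [integral_const_mul, (hIexp a).2]
  · -- bound for a ≥ A
    intro a haA
    have ha0 : (0:ℝ) ≤ a := le_trans hA.le haA
    simp only [hrw]
    have hderiv : ∀ x ∈ Ici a, HasDerivAt (fun s => -Real.exp (-(G s - G a)))
        ((μ + b x) * Real.exp (-(G x - G a))) x := by
      intro x _
      have h1 : HasDerivAt (fun s => -(G s - G a)) (-(μ + b x)) x := ((hGd x).sub_const _).neg
      have h2 := h1.exp.neg
      refine h2.congr_deriv ?_
      ring
    have hpos : ∀ x ∈ Ioi a, (0:ℝ) ≤ (μ + b x) * Real.exp (-(G x - G a)) := by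
      intro x hx
      have hx' : ε < μ + b x := htail x (le_trans haA (le_of_lt hx))
      exact mul_nonneg (by linarith) (Real.exp_pos _).le
    have htend0 : Tendsto (fun s => Real.exp (-(G s - G a))) atTop (𝓝 0) := by
      apply squeeze_zero' (Eventually.of_forall fun s => (Real.exp_pos _).le)
        (eventually_atTop.2 ⟨a, fun s hs => hexp a s ha0 hs⟩)
      have hT : Tendsto (fun s : ℝ => ε * (s - a)) atTop atTop := by
        apply Tendsto.const_mul_atTop hε
        simpa [sub_eq_add_neg] using tendsto_atTop_add_const_right atTop (-a) tendsto_id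
      simpa using (Real.tendsto_exp_neg_atTop_nhds_zero.comp hT).const_mul K
    have htendneg : Tendsto (fun s => -Real.exp (-(G s - G a))) atTop (𝓝 0) := by
      simpa using htend0.neg
    have hJ1 : (∫ s in Ioi a, (μ + b s) * Real.exp (-(G s - G a))) = 1 := by
      rw [integral_Ioi_of_hasDerivAt_of_nonneg' hderiv hpos htendneg]
      simp
    have hint1 : IntegrableOn (fun s => (μ + b s) * Real.exp (-(G s - G a))) (Ioi a) :=
      integrableOn_Ioi_deriv_of_nonneg' hderiv hpos htendneg
    have hint2 : IntegrableOn (fun s => Real.exp (-(G s - G a))) (Ioi a) := by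
      apply Integrable.mono ((hIexp a).1.const_mul K)
        (Real.continuous_exp.comp ((hGc.sub continuous_const).neg)).aestronglyMeasurable
      apply ae_restrict_of_forall_mem measurableSet_Ioi
      intro s hs
      have hs' : a < s := hs
      have h1 := hexp a s ha0 hs'.le
      have h2 : K * Real.exp (-(ε * (s - a))) ≤ |K * Real.exp (-(ε * (s - a)))| := le_abs_self _
      simp only [Function.comp_apply, Pi.neg_apply, Pi.sub_apply, Real.norm_eq_abs, Real.abs_exp]
      exact h1.trans h2
    have hsplit : (∫ s in Ioi a, b s * Real.exp (-(G s - G a))) =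
        (∫ s in Ioi a, (μ + b s) * Real.exp (-(G s - G a))) +
        (∫ s in Ioi a, (-μ) * Real.exp (-(G s - G a))) := by
      rw [← integral_add hint1 (hint2.const_mul _)]
      congr 1
      funext s
      ring
    have hJ2 : (∫ s in Ioi a, (-μ) * Real.exp (-(G s - G a))) ≤ (-μ) * (1/ε) := by
      rw [integral_const_mul]
      apply mul_le_mul_of_nonneg_left _ (by linarith)
      rw [← (hIexp a).2]
      apply setIntegral_mono_on hint2 (hIexp a).1 measurableSet_Ioi
      intro s hs
      have hs' : a < s := hs
      apply Real.exp_le_exp.2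
      have := key1 a s haA hs'.le
      linarith
    rw [hsplit, hJ1]
    have habsμ : |μ| = -μ := abs_of_neg hμ
    rw [habsμ]
    have : -μ / ε = -μ * (1/ε) := by ring
    linarith [hJ2]
end

section
/- Suppose F : [0,∞) → ℝ is differentiable and satisfies F'(t) ≤ Σ_{i=1}^N P_i(t) e^{-κ_i t} - γ F(t), where γ > 0, κ_i > 0 and each P_i is a polynomial of degree α_i. Then there exist a constant K and polynomials Q_i of degree at most α_i + 1 such that F(t) ≤ K e^{-γ t} + Σ_{i=1}^N Q_i(t) e^{-κ_i t} for all t ≥ 0. -/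
open Real Polynomial Finset

/-- Solve `Q' + c Q = P` with `deg Q ≤ deg P + 1`. -/
lemma exists_poly_ode (c : ℝ) :
    ∀ n : ℕ, ∀ P : Polynomial ℝ, P.natDegree ≤ n →
      ∃ Q : Polynomial ℝ, Q.natDegree ≤ n + 1 ∧
        Polynomial.derivative Q + Polynomial.C c * Q = P := by
  intro n
  induction n with
  | zero =>
    intro P hP
    rcases eq_or_ne c 0 with rfl | hc
    · refine ⟨Polynomial.C (P.coeff 0) * Polynomial.X,
        (Polynomial.natDegree_C_mul_le _ _).trans (by simp), ?_⟩
      conv_rhs => rw [Polynomial.eq_C_of_natDegree_le_zero hP]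
      simp
    · refine ⟨Polynomial.C (P.coeff 0 / c), by simp, ?_⟩
      conv_rhs => rw [Polynomial.eq_C_of_natDegree_le_zero hP]
      rw [Polynomial.derivative_C, ← Polynomial.C_mul, mul_div_cancel₀ _ hc, zero_add]
  | succ n ih =>
    intro P hP
    rcases eq_or_ne c 0 with rfl | hc
    · -- pure antiderivative
      refine ⟨∑ i ∈ Finset.range (n + 2), Polynomial.C (P.coeff i / (i + 1)) *
        Polynomial.X ^ (i + 1), ?_, ?_⟩
      · refine Polynomial.natDegree_sum_le_of_forall_le _ _ fun i hi => ?_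
        have := Finset.mem_range.mp hi
        refine (Polynomial.natDegree_C_mul_le _ _).trans ?_
        simp only [Polynomial.natDegree_X_pow]
        omega
      · rw [map_sum]
        conv_rhs => rw [P.as_sum_range' (n + 2) (by omega)]
        simp only [Polynomial.C_0, zero_mul, add_zero]
        refine Finset.sum_congr rfl fun i _ => ?_
        rw [Polynomial.derivative_C_mul, Polynomial.derivative_X_pow]
        push_cast
        rw [← mul_assoc, ← Polynomial.C_mul,
          div_mul_cancel₀ _ (by positivity : ((i : ℝ) + 1) ≠ 0),
          Polynomial.C_mul_X_pow_eq_monomial]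
    · have hP' : (Polynomial.derivative P).natDegree ≤ n := by
        have := Polynomial.natDegree_derivative_le P
        omega
      obtain ⟨R, hRdeg, hR⟩ := ih (Polynomial.derivative P) hP'
      refine ⟨Polynomial.C c⁻¹ * (P - R), ?_, ?_⟩
      · refine (Polynomial.natDegree_C_mul_le _ _).trans ?_
        refine (Polynomial.natDegree_sub_le _ _).trans ?_
        omega
      · rw [Polynomial.derivative_C_mul, Polynomial.derivative_sub]
        have : Polynomial.derivative R = Polynomial.derivative P - Polynomial.C c * R := by
          linear_combination hR
        rw [this]
        have h1 : Polynomial.C c⁻¹ * Polynomial.C c = 1 := by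
          rw [← Polynomial.C_mul, inv_mul_cancel₀ hc, Polynomial.C_1]
        linear_combination P * h1

/-- Modified Grönwall lemma: if `F' ≤ Σᵢ Pᵢ(t) e^{-κᵢ t} - γ F`, then
`F(t) ≤ K e^{-γ t} + Σᵢ Qᵢ(t) e^{-κᵢ t}` with `deg Qᵢ ≤ deg Pᵢ + 1`. -/
theorem stmt_8 (N : ℕ) (F F' : ℝ → ℝ) (γ : ℝ) (hγ : 0 < γ)
    (κ : Fin N → ℝ) (hκ : ∀ i, 0 < κ i)
    (P : Fin N → Polynomial ℝ)
    (hF : ∀ t : ℝ, 0 ≤ t → HasDerivAt F (F' t) t)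
    (hineq : ∀ t : ℝ, 0 ≤ t →
      F' t ≤ (∑ i, (P i).eval t * Real.exp (-(κ i * t))) - γ * F t) :
    ∃ (K : ℝ) (Q : Fin N → Polynomial ℝ),
      (∀ i, (Q i).natDegree ≤ (P i).natDegree + 1) ∧
      ∀ t : ℝ, 0 ≤ t →
        F t ≤ K * Real.exp (-(γ * t)) +
          ∑ i, (Q i).eval t * Real.exp (-(κ i * t)) := by
  choose Q hQdeg hQ using fun i => exists_poly_ode (γ - κ i) (P i).natDegree (P i) le_rfl
  set H : ℝ → ℝ :=
    fun t => F t * Real.exp (γ * t) - ∑ i, (Q i).eval t * Real.exp ((γ - κ i) * t) with hHdef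
  have hHd : ∀ t : ℝ, 0 ≤ t → HasDerivAt H
      ((F' t + γ * F t) * Real.exp (γ * t)
        - ∑ i, (P i).eval t * Real.exp ((γ - κ i) * t)) t := by
    intro t ht
    have h1 : HasDerivAt (fun t => F t * Real.exp (γ * t))
        (F' t * Real.exp (γ * t) + F t * (Real.exp (γ * t) * γ)) t := by
      have := (hF t ht).fun_mul (((hasDerivAt_id t).const_mul γ).exp)
      simpa using this
    have h2 : ∀ i : Fin N, HasDerivAt (fun t => (Q i).eval t * Real.exp ((γ - κ i) * t))
        ((P i).eval t * Real.exp ((γ - κ i) * t)) t := by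
      intro i
      have h := ((Q i).hasDerivAt t).fun_mul (((hasDerivAt_id t).const_mul (γ - κ i)).exp)
      refine h.congr_deriv ?_
      have h3 := congrArg (Polynomial.eval t) (hQ i)
      simp only [Polynomial.eval_add, Polynomial.eval_mul, Polynomial.eval_C] at h3
      rw [← h3]
      simp
      ring
    have hsum : HasDerivAt (fun t => ∑ i, (Q i).eval t * Real.exp ((γ - κ i) * t))
        (∑ i, (P i).eval t * Real.exp ((γ - κ i) * t)) t :=
      HasDerivAt.fun_sum fun i _ => h2 i
    have := h1.fun_sub hsum
    refine this.congr_deriv ?_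
    ring
  have hcont : ContinuousOn H (Set.Ici 0) :=
    fun t ht => (hHd t ht).continuousAt.continuousWithinAt
  have hdiff : DifferentiableOn ℝ H (interior (Set.Ici 0)) := by
    rw [interior_Ici]
    exact fun t ht => ((hHd t (le_of_lt ht)).differentiableAt).differentiableWithinAt
  have hderiv : ∀ t ∈ interior (Set.Ici (0:ℝ)), deriv H t ≤ 0 := by
    rw [interior_Ici]
    intro t ht
    have ht' : (0:ℝ) ≤ t := le_of_lt ht
    rw [(hHd t ht').deriv]
    have hi := hineq t ht'
    have he : (0:ℝ) < Real.exp (γ * t) := Real.exp_pos _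
    have h4 : (F' t + γ * F t) * Real.exp (γ * t) ≤
        (∑ i, (P i).eval t * Real.exp (-(κ i * t))) * Real.exp (γ * t) := by
      apply mul_le_mul_of_nonneg_right _ he.le
      linarith
    have h5 : (∑ i, (P i).eval t * Real.exp (-(κ i * t))) * Real.exp (γ * t)
        = ∑ i, (P i).eval t * Real.exp ((γ - κ i) * t) := by
      rw [Finset.sum_mul]
      refine Finset.sum_congr rfl fun i _ => ?_
      rw [mul_assoc, ← Real.exp_add]
      congr 2
      ring
    linarith [h4, h5.ge]
  have hanti : AntitoneOn H (Set.Ici 0) :=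
    antitoneOn_of_deriv_nonpos (convex_Ici 0) hcont hdiff hderiv
  refine ⟨H 0, Q, hQdeg, ?_⟩
  intro t ht
  have h6 : H t ≤ H 0 := hanti Set.self_mem_Ici (Set.mem_Ici.mpr ht) ht
  have h7 : F t * Real.exp (γ * t) ≤
      H 0 + ∑ i, (Q i).eval t * Real.exp ((γ - κ i) * t) := by
    simp only [hHdef] at h6 ⊢
    linarith
  have h8 : F t = (F t * Real.exp (γ * t)) * Real.exp (-(γ * t)) := by
    rw [mul_assoc, ← Real.exp_add]
    simp
  rw [h8]
  calc (F t * Real.exp (γ * t)) * Real.exp (-(γ * t))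
      ≤ (H 0 + ∑ i, (Q i).eval t * Real.exp ((γ - κ i) * t)) * Real.exp (-(γ * t)) :=
        mul_le_mul_of_nonneg_right h7 (Real.exp_pos _).le
    _ = H 0 * Real.exp (-(γ * t)) + ∑ i, (Q i).eval t * Real.exp (-(κ i * t)) := by
        rw [add_mul, Finset.sum_mul]
        congr 1
        refine Finset.sum_congr rfl fun i _ => ?_
        rw [mul_assoc, ← Real.exp_add]
        congr 2
        ring
end

section
/- Let J ≥ 1, and for j = 1,…,J let λ_j be pairwise distinct reals and c_j ≠ 0 reals. Consider the lower bidiagonal matrix A ∈ ℝ^{J×J} with A_{jj} = λ_j and A_{j+1,j} = c_j. Let M(t) = e^{tA} M(0) with M(0) = (N, 0, …, 0), N > 0. If u ∈ ℝ^J satisfies uᵀ M(t) = 0 for all t ≥ 0, then u = 0. -/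
open Matrix Finset

attribute [local instance] Matrix.linftyOpNormedRing Matrix.linftyOpNormedAlgebra

/-- From vanishing of `uᵀ exp(tA) e₁` on `[0,∞)` deduce vanishing of all moments. -/
lemma moments_zero {m : Type*} [Fintype m] [DecidableEq m]
    (A : Matrix m m ℝ) (e1 u : m → ℝ)
    (hu : ∀ t : ℝ, 0 ≤ t →
      ∑ j, u j * ((NormedSpace.exp (t • A)).mulVec e1) j = 0)
    (k : ℕ) : ∑ j, u j * ((A ^ k).mulVec e1) j = 0 := by
  have hLlin : IsLinearMap ℝ (fun B : Matrix m m ℝ => ∑ j, u j * (B.mulVec e1) j) := by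
    constructor
    · intro B C
      simp [Matrix.add_mulVec, mul_add, Finset.sum_add_distrib]
    · intro r B
      simp [Matrix.smul_mulVec, Finset.mul_sum, mul_left_comm]
  set L : Matrix m m ℝ →L[ℝ] ℝ := LinearMap.toContinuousLinearMap hLlin.mk' with hL
  have hLapp : ∀ B : Matrix m m ℝ, L B = ∑ j, u j * (B.mulVec e1) j := fun B => rfl
  set G : ℕ → ℝ → ℝ := fun k t => L (NormedSpace.exp (t • A) * A ^ k) with hG
  have hderiv : ∀ (k : ℕ) (t : ℝ), HasDerivAt (G k) (G (k + 1) t) t := by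
    intro k t
    have h1 : HasDerivAt (fun s : ℝ => NormedSpace.exp (s • A) * A ^ k)
        (NormedSpace.exp (t • A) * A * A ^ k) t :=
      (hasDerivAt_exp_smul_const A t).mul_const _
    have h2 := L.hasFDerivAt.comp_hasDerivAt t h1
    have : NormedSpace.exp (t • A) * A * A ^ k
        = NormedSpace.exp (t • A) * A ^ (k + 1) := by
      rw [mul_assoc, ← pow_succ']
    rw [this] at h2
    exact h2
  have hzero : ∀ (k : ℕ) (t : ℝ), 0 ≤ t → G k t = 0 := by
    intro k
    induction k with
    | zero =>
      intro t ht
      simpa [hG, hLapp] using hu t ht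
    | succ k ih =>
      intro t ht
      rcases eq_or_lt_of_le ht with h | h
      · -- t = 0 : use continuity from the right
        have hcont : ContinuousAt (G (k + 1)) t := (hderiv (k + 1) t).continuousAt
        have t1 : Filter.Tendsto (G (k + 1)) (nhdsWithin t (Set.Ioi t))
            (nhds (G (k + 1) t)) := hcont.continuousWithinAt.tendsto
        have t2 : Filter.Tendsto (G (k + 1)) (nhdsWithin t (Set.Ioi t)) (nhds 0) := by
          apply Filter.Tendsto.congr' _ tendsto_const_nhds
          filter_upwards [self_mem_nhdsWithin] with s hs
          have hs' : (0 : ℝ) < s := lt_of_le_of_lt ht hs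
          -- G (k+1) s = 0 since G k vanishes near s
          have hev : G k =ᶠ[nhds s] fun _ => 0 := by
            filter_upwards [Ioi_mem_nhds hs'] with r hr
            exact ih r (le_of_lt hr)
          have hd0 : HasDerivAt (G k) 0 s :=
            (hasDerivAt_const s (0 : ℝ)).congr_of_eventuallyEq hev
          exact ((hderiv k s).unique hd0).symm
        exact tendsto_nhds_unique t1 t2
      · have hev : G k =ᶠ[nhds t] fun _ => 0 := by
          filter_upwards [Ioi_mem_nhds h] with r hr
          exact ih r (le_of_lt hr)
        have hd0 : HasDerivAt (G k) 0 t :=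
          (hasDerivAt_const t (0 : ℝ)).congr_of_eventuallyEq hev
        exact (hderiv k t).unique hd0
  have := hzero k 0 le_rfl
  simpa [hG, hLapp, NormedSpace.exp_zero] using this

/-- Identifiability lemma: for the lower bidiagonal matrix `A` with distinct
diagonal entries `λ_j` and nonzero subdiagonal entries `c_j`, if
`uᵀ M(t) = 0` for all `t ≥ 0` where `M(t) = e^{tA} (N,0,…,0)`, `N > 0`,
then `u = 0`. -/
theorem stmt_9 (n : ℕ) (lam c : Fin (n + 1) → ℝ)
    (hdist : Function.Injective lam)
    (hc : ∀ j : Fin (n + 1), (j : ℕ) + 1 < n + 1 → c j ≠ 0)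
    (A : Matrix (Fin (n + 1)) (Fin (n + 1)) ℝ)
    (hA : ∀ i j : Fin (n + 1), A i j =
      if i = j then lam j else if (i : ℕ) = (j : ℕ) + 1 then c j else 0)
    (N : ℝ) (hN : 0 < N)
    (M : ℝ → Fin (n + 1) → ℝ)
    (hM : ∀ t : ℝ, M t =
      (NormedSpace.exp (t • A)).mulVec (fun j => if j = 0 then N else 0))
    (u : Fin (n + 1) → ℝ)
    (hu : ∀ t : ℝ, 0 ≤ t → ∑ j, u j * M t j = 0) :
    u = 0 := by
  classical
  set e1 : Fin (n + 1) → ℝ := fun j => if j = 0 then N else 0 with he1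
  have hmom : ∀ k : ℕ, ∑ j, u j * ((A ^ k).mulVec e1) j = 0 := by
    intro k
    exact moments_zero A e1 u (fun t ht => by simpa [hM t] using hu t ht) k
  set v : ℕ → Fin (n + 1) → ℝ := fun k => (A ^ k).mulVec e1 with hv
  have hvsucc : ∀ k, v (k + 1) = A.mulVec (v k) := by
    intro k
    simp only [hv, pow_succ']
    rw [← Matrix.mulVec_mulVec]
  -- structural facts about v
  have hstruct : ∀ k : ℕ, (∀ j : Fin (n + 1), k < (j : ℕ) → v k j = 0) ∧
      (∀ hk : k < n + 1, v k ⟨k, hk⟩ ≠ 0) := by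
    intro k
    induction k with
    | zero =>
      constructor
      · intro j hj
        have hj0 : j ≠ 0 := by
          intro h; rw [h] at hj; simp at hj
        simp [hv, he1, Matrix.mulVec_one, hj0]
      · intro hk
        have : (⟨0, hk⟩ : Fin (n + 1)) = 0 := rfl
        simp [hv, he1, this, hN.ne']
    | succ k ih =>
      obtain ⟨ihz, ihd⟩ := ih
      have hz : ∀ j : Fin (n + 1), k + 1 < (j : ℕ) → v (k + 1) j = 0 := by
        intro j hj
        rw [hvsucc]
        show ∑ l, A j l * v k l = 0
        apply Finset.sum_eq_zero
        intro l _
        rw [hA]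
        by_cases h1 : j = l
        · subst h1
          simp only [if_pos rfl]
          rw [ihz j (by omega)]
          ring
        · rw [if_neg h1]
          by_cases h2 : (j : ℕ) = (l : ℕ) + 1
          · rw [if_pos h2]
            rw [ihz l (by omega)]
            ring
          · rw [if_neg h2]; ring
      refine ⟨hz, ?_⟩
      intro hk
      rw [hvsucc]
      show ∑ l, A ⟨k + 1, hk⟩ l * v k l ≠ 0
      have hkn : k < n + 1 := by omega
      rw [Finset.sum_eq_single (⟨k, hkn⟩ : Fin (n + 1))]
      · rw [hA]
        have h1 : (⟨k + 1, hk⟩ : Fin (n + 1)) ≠ ⟨k, hkn⟩ := by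
          simp [Fin.ext_iff]
        rw [if_neg h1, if_pos rfl]
        exact mul_ne_zero (hc ⟨k, hkn⟩ (by simpa using hk)) (ihd hkn)
      · intro l _ hl
        rw [hA]
        by_cases h1 : (⟨k + 1, hk⟩ : Fin (n + 1)) = l
        · rw [if_pos h1]
          rw [show v k l = 0 from ihz l (by rw [← h1]; simp)]
          ring
        · rw [if_neg h1]
          have h2 : ((⟨k + 1, hk⟩ : Fin (n + 1)) : ℕ) ≠ (l : ℕ) + 1 := by
            intro h
            apply hl
            apply Fin.ext
            simpa using h.symm
          rw [if_neg h2]; ring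
      · intro h
        exact absurd (Finset.mem_univ _) h
  -- conclude u = 0 by strong induction
  have key : ∀ m : ℕ, ∀ j : Fin (n + 1), (j : ℕ) = m → u j = 0 := by
    intro m
    induction m using Nat.strong_induction_on with
    | _ m ih =>
      intro j hj
      have hsum := hmom m
      rw [Finset.sum_eq_single j] at hsum
      · have hvj : v m j ≠ 0 := by
          have := (hstruct m).2 (by omega)
          convert this using 2
          exact Fin.ext hj
        exact (mul_eq_zero.mp hsum).resolve_right hvj
      · intro i _ hij
        rcases lt_trichotomy (i : ℕ) m with h | h | h
        · rw [ih (i : ℕ) h i rfl]; ring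
        · exact absurd (Fin.ext (h.trans hj.symm)) hij
        · have h0 := (hstruct m).1 i h
          simp only [hv] at h0
          rw [h0]; ring
      · intro h
        exact absurd (Finset.mem_univ _) h
  funext j
  exact key (j : ℕ) j rfl
end

section
/- Let J ≥ 1. For parameters P = (N, (b_j), (p_S^{(j)})) with N > 0, b_j > 0, p_S^{(j)} ∈ (0,1) for j < J and p_S^{(J)} = 1, define A_P by (A_P)_{jj} = (2p_S^{(j)} - 1) b_j and (A_P)_{j+1,j} = 2(1 - p_S^{(j)}) b_j, and let M(t;P) = e^{tA_P}(N,0,…,0). If M(t;P) = M(t;P̃) for all t ≥ 0, then P = P̃. -/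
open Matrix

private lemma aux_mulVec_zero {n : ℕ} (A : Matrix (Fin (n+1)) (Fin (n+1)) ℝ)
    (hA0 : ∀ i j : Fin (n+1), i ≠ j → (i:ℕ) ≠ (j:ℕ) + 1 → A i j = 0)
    (w : Fin (n+1) → ℝ) :
    (A *ᵥ w) 0 = A 0 0 * w 0 := by
  have : (A *ᵥ w) 0 = ∑ m : Fin (n+1), A 0 m * w m := by
    simp [Matrix.mulVec, dotProduct]
  rw [this]
  apply Finset.sum_eq_single
  · intro m _ hm
    rw [hA0 0 m (Ne.symm hm) (by simp), zero_mul]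
  · simp

private lemma aux_mulVec_succ {n : ℕ} (A : Matrix (Fin (n+1)) (Fin (n+1)) ℝ)
    (hA0 : ∀ i j : Fin (n+1), i ≠ j → (i:ℕ) ≠ (j:ℕ) + 1 → A i j = 0)
    (w : Fin (n+1) → ℝ) (j : Fin n) :
    (A *ᵥ w) j.succ = A j.succ j.succ * w j.succ + A j.succ j.castSucc * w j.castSucc := by
  have hne : (j.castSucc : Fin (n+1)) ≠ j.succ := by
    simp [Fin.ext_iff]
  have hsum : (A *ᵥ w) j.succ = ∑ m : Fin (n+1), A j.succ m * w m := by
    simp [Matrix.mulVec, dotProduct]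
  rw [hsum, ← Finset.add_sum_erase _ _ (Finset.mem_univ j.succ)]
  congr 1
  rw [← Finset.add_sum_erase _ _ (Finset.mem_erase.2 ⟨hne, Finset.mem_univ _⟩)]
  have hz : ∑ m ∈ ((Finset.univ.erase j.succ).erase j.castSucc),
      A j.succ m * w m = 0 := by
    apply Finset.sum_eq_zero
    intro m hm
    obtain ⟨hm1, hm2, -⟩ : m ≠ j.castSucc ∧ m ≠ j.succ ∧ True := by
      rcases Finset.mem_erase.1 hm with ⟨h1, h2⟩
      exact ⟨h1, (Finset.mem_erase.1 h2).1, trivial⟩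
    rw [hA0 _ _ (Ne.symm hm2) ?_, zero_mul]
    simp only [Fin.val_succ]
    intro hcon
    apply hm1
    apply Fin.ext
    simp only [Fin.coe_castSucc]
    omega
  rw [hz, add_zero]

private lemma aux_struct {n : ℕ} (N : ℝ) (hN : 0 < N)
    (A : Matrix (Fin (n+1)) (Fin (n+1)) ℝ)
    (hA0 : ∀ i j : Fin (n+1), i ≠ j → (i:ℕ) ≠ (j:ℕ) + 1 → A i j = 0)
    (hsub : ∀ j : Fin n, 0 < A j.succ j.castSucc) :
    (∀ (k : ℕ) (i : Fin (n+1)), k < (i : ℕ) →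
        ((A ^ k) *ᵥ (fun j => if j = 0 then N else 0)) i = 0) ∧
    (∀ (k : ℕ) (hk : k ≤ n), 0 < ((A ^ k) *ᵥ (fun j => if j = 0 then N else 0)) ⟨k, by omega⟩) := by
  set v : Fin (n+1) → ℝ := fun j => if j = 0 then N else 0 with hv
  have van : ∀ (k : ℕ) (i : Fin (n+1)), k < (i : ℕ) → ((A ^ k) *ᵥ v) i = 0 := by
    intro k
    induction k with
    | zero =>
      intro i hi
      rw [pow_zero, Matrix.one_mulVec]
      have : i ≠ 0 := by
        intro h; rw [h] at hi; simp at hi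
      simp [hv, this]
    | succ k ih =>
      intro i hi
      have hi1 : 1 ≤ (i : ℕ) := by omega
      set j : Fin n := ⟨(i : ℕ) - 1, by omega⟩ with hj
      have hji : j.succ = i := by
        apply Fin.ext; simp [hj]; omega
      rw [pow_succ', ← Matrix.mulVec_mulVec, ← hji,
        aux_mulVec_succ A hA0 ((A ^ k) *ᵥ v) j,
        ih j.succ (by simp [hji]; omega), ih j.castSucc (by simp [hj]; omega),
        mul_zero, mul_zero, add_zero]
  refine ⟨van, ?_⟩
  intro k
  induction k with
  | zero =>
    intro _
    rw [pow_zero, Matrix.one_mulVec]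
    simpa [hv] using hN
  | succ k ih =>
    intro hk
    have hkn : k < n := by omega
    set j : Fin n := ⟨k, hkn⟩ with hj
    have hji : j.succ = (⟨k + 1, by omega⟩ : Fin (n+1)) := by
      apply Fin.ext; simp [hj]
    have hjc : j.castSucc = (⟨k, by omega⟩ : Fin (n+1)) := by
      apply Fin.ext; simp [hj]
    rw [← hji, pow_succ', ← Matrix.mulVec_mulVec,
      aux_mulVec_succ A hA0 ((A ^ k) *ᵥ v) j,
      van k j.succ (by simp [hj]), mul_zero, zero_add]
    have h1 := ih (by omega)
    rw [← hjc] at h1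
    exact mul_pos (hsub j) h1

private lemma key_deriv {m : ℕ} (A A' : Matrix (Fin m) (Fin m) ℝ) (v v' : Fin m → ℝ)
    (hM : ∀ t : ℝ, 0 ≤ t →
      (NormedSpace.exp (t • A)).mulVec v = (NormedSpace.exp (t • A')).mulVec v') :
    ∀ k : ℕ, (A ^ k) *ᵥ v = (A' ^ k) *ᵥ v' := by
  letI : SeminormedRing (Matrix (Fin m) (Fin m) ℝ) := Matrix.linftyOpSemiNormedRing
  letI : NormedRing (Matrix (Fin m) (Fin m) ℝ) := Matrix.linftyOpNormedRing
  letI : NormedAlgebra ℝ (Matrix (Fin m) (Fin m) ℝ) := Matrix.linftyOpNormedAlgebra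
  -- the continuous linear map X ↦ (B * X) *ᵥ w
  have mkL : ∀ (B : Matrix (Fin m) (Fin m) ℝ) (w : Fin m → ℝ),
      ∃ L : Matrix (Fin m) (Fin m) ℝ →L[ℝ] (Fin m → ℝ), ∀ X, L X = (B * X) *ᵥ w := by
    intro B w
    refine ⟨LinearMap.toContinuousLinearMap
      { toFun := fun X => (B * X) *ᵥ w
        map_add' := by intro X Y; simp only [mul_add, Matrix.add_mulVec]
        map_smul' := by intro c X; simp only [mul_smul_comm, Matrix.smul_mulVec, RingHom.id_apply] },
      fun X => rfl⟩
  choose L hL using mkL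
  have hderiv : ∀ (B : Matrix (Fin m) (Fin m) ℝ) (w : Fin m → ℝ) (k : ℕ) (t : ℝ),
      HasDerivAt (fun u => (B ^ k * NormedSpace.exp (u • B)) *ᵥ w)
        ((B ^ (k+1) * NormedSpace.exp (t • B)) *ᵥ w) t := by
    intro B w k t
    have h1 : HasDerivAt (fun u : ℝ => NormedSpace.exp (u • B))
        (B * NormedSpace.exp (t • B)) t := hasDerivAt_exp_smul_const' B t
    have h2 := (L (B ^ k) w).hasFDerivAt.comp_hasDerivAt t h1
    have h3 : (⇑(L (B ^ k) w) ∘ fun u : ℝ => NormedSpace.exp (u • B)) =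
        fun u : ℝ => (B ^ k * NormedSpace.exp (u • B)) *ᵥ w := by
      funext u; exact hL _ _ _
    rw [h3] at h2
    refine h2.congr_deriv ?_
    rw [pow_succ, mul_assoc]; exact hL _ _ _
  have hcont : ∀ (B : Matrix (Fin m) (Fin m) ℝ) (w : Fin m → ℝ) (k : ℕ),
      Continuous (fun t : ℝ => (B ^ k * NormedSpace.exp (t • B)) *ᵥ w) :=
    fun B w k => continuous_iff_continuousAt.2 fun t => (hderiv B w k t).continuousAt
  have hEq : ∀ k : ℕ, Set.EqOn (fun t : ℝ => (A ^ k * NormedSpace.exp (t • A)) *ᵥ v)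
      (fun t : ℝ => (A' ^ k * NormedSpace.exp (t • A')) *ᵥ v') (Set.Ici 0) := by
    intro k
    induction k with
    | zero =>
      intro t ht
      simpa only [pow_zero, one_mul] using hM t ht
    | succ k ih =>
      have hIoi : Set.EqOn (fun t : ℝ => (A ^ (k+1) * NormedSpace.exp (t • A)) *ᵥ v)
          (fun t : ℝ => (A' ^ (k+1) * NormedSpace.exp (t • A')) *ᵥ v') (Set.Ioi 0) := by
        intro t (ht : (0:ℝ) < t)
        have hfe : (fun u : ℝ => (A' ^ k * NormedSpace.exp (u • A')) *ᵥ v')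
            =ᶠ[nhds t] (fun u : ℝ => (A ^ k * NormedSpace.exp (u • A)) *ᵥ v) :=
          Filter.eventuallyEq_of_mem (Ici_mem_nhds ht) fun u hu => (ih hu).symm
        exact ((hderiv A v k t).congr_of_eventuallyEq hfe).unique (hderiv A' v' k t)
      have hc := hIoi.closure (hcont A v (k+1)) (hcont A' v' (k+1))
      rwa [closure_Ioi] at hc
  intro k
  have h0 := hEq k Set.self_mem_Ici
  simpa only [zero_smul, NormedSpace.exp_zero, mul_one] using h0
/-- Structural identifiability of the age-independent multilayer model:
two parameter sets producing the same layerwise mean cell numbers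
`M(t;P) = e^{tA_P}(N,0,…,0)` for all `t ≥ 0` must coincide. -/
theorem stmt_10 (n : ℕ)
    (N N' : ℝ) (b b' pS pS' : Fin (n + 1) → ℝ)
    (hN : 0 < N) (hN' : 0 < N')
    (hb : ∀ j, 0 < b j) (hb' : ∀ j, 0 < b' j)
    (hpS : ∀ j : Fin (n + 1), j ≠ Fin.last n → pS j ∈ Set.Ioo (0:ℝ) 1)
    (hpS' : ∀ j : Fin (n + 1), j ≠ Fin.last n → pS' j ∈ Set.Ioo (0:ℝ) 1)
    (hlast : pS (Fin.last n) = 1) (hlast' : pS' (Fin.last n) = 1)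
    (A A' : Matrix (Fin (n + 1)) (Fin (n + 1)) ℝ)
    (hA : ∀ i j, A i j =
      if i = j then (2 * pS j - 1) * b j
      else if (i : ℕ) = (j : ℕ) + 1 then 2 * (1 - pS j) * b j else 0)
    (hA' : ∀ i j, A' i j =
      if i = j then (2 * pS' j - 1) * b' j
      else if (i : ℕ) = (j : ℕ) + 1 then 2 * (1 - pS' j) * b' j else 0)
    (hM : ∀ t : ℝ, 0 ≤ t →
      (NormedSpace.exp (t • A)).mulVec (fun j => if j = 0 then N else 0) =
      (NormedSpace.exp (t • A')).mulVec (fun j => if j = 0 then N' else 0)) :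
    N = N' ∧ b = b' ∧ pS = pS' := by
  set v : Fin (n+1) → ℝ := fun j => if j = 0 then N else 0 with hv
  set v' : Fin (n+1) → ℝ := fun j => if j = 0 then N' else 0 with hv'
  have key := key_deriv A A' v v' hM
  -- zero-pattern hypotheses
  have hA0 : ∀ i j : Fin (n+1), i ≠ j → (i:ℕ) ≠ (j:ℕ) + 1 → A i j = 0 := by
    intro i j h1 h2; rw [hA i j, if_neg h1, if_neg h2]
  have hA0' : ∀ i j : Fin (n+1), i ≠ j → (i:ℕ) ≠ (j:ℕ) + 1 → A' i j = 0 := by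
    intro i j h1 h2; rw [hA' i j, if_neg h1, if_neg h2]
  -- positivity of subdiagonal entries
  have hsub : ∀ j : Fin n, 0 < A j.succ j.castSucc := by
    intro j
    have h1 : (j.succ : Fin (n+1)) ≠ j.castSucc := by simp [Fin.ext_iff]
    have h2 : ((j.succ : Fin (n+1)) : ℕ) = ((j.castSucc : Fin (n+1)) : ℕ) + 1 := by simp
    rw [hA, if_neg h1, if_pos h2]
    have h3 : j.castSucc ≠ Fin.last n := (Fin.castSucc_lt_last j).ne
    have h4 := hpS j.castSucc h3
    have := hb j.castSucc
    nlinarith [h4.2]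
  have hsub' : ∀ j : Fin n, 0 < A' j.succ j.castSucc := by
    intro j
    have h1 : (j.succ : Fin (n+1)) ≠ j.castSucc := by simp [Fin.ext_iff]
    have h2 : ((j.succ : Fin (n+1)) : ℕ) = ((j.castSucc : Fin (n+1)) : ℕ) + 1 := by simp
    rw [hA', if_neg h1, if_pos h2]
    have h3 : j.castSucc ≠ Fin.last n := (Fin.castSucc_lt_last j).ne
    have h4 := hpS' j.castSucc h3
    have := hb' j.castSucc
    nlinarith [h4.2]
  obtain ⟨van, pos⟩ := aux_struct N hN A hA0 hsub
  obtain ⟨van', pos'⟩ := aux_struct N' hN' A' hA0' hsub'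
  -- N = N'
  have hNN : N = N' := by
    have h0 := key 0
    rw [pow_zero, pow_zero, Matrix.one_mulVec, Matrix.one_mulVec] at h0
    have := congrFun h0 0
    simpa [hv, hv'] using this
  -- subdiagonal entries agree
  have hsubeq : ∀ j : Fin n, A j.succ j.castSucc = A' j.succ j.castSucc := by
    intro j
    have hk := congrFun (key ((j : ℕ) + 1)) j.succ
    have e1 : ((A ^ ((j : ℕ) + 1)) *ᵥ v) j.succ
        = A j.succ j.castSucc * ((A ^ (j : ℕ)) *ᵥ v) j.castSucc := by
      rw [pow_succ', ← Matrix.mulVec_mulVec, aux_mulVec_succ A hA0,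
        van (j : ℕ) j.succ (by simp), mul_zero, zero_add]
    have e1' : ((A' ^ ((j : ℕ) + 1)) *ᵥ v') j.succ
        = A' j.succ j.castSucc * ((A' ^ (j : ℕ)) *ᵥ v') j.castSucc := by
      rw [pow_succ', ← Matrix.mulVec_mulVec, aux_mulVec_succ A' hA0',
        van' (j : ℕ) j.succ (by simp), mul_zero, zero_add]
    rw [e1, e1'] at hk
    have hcc : ((A' ^ (j : ℕ)) *ᵥ v') j.castSucc = ((A ^ (j : ℕ)) *ᵥ v) j.castSucc :=
      (congrFun (key (j : ℕ)) j.castSucc).symm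
    rw [hcc] at hk
    have hcpos : 0 < ((A ^ (j : ℕ)) *ᵥ v) j.castSucc := by
      have h1 := pos (j : ℕ) (by omega)
      have hjc : (⟨(j : ℕ), by omega⟩ : Fin (n+1)) = j.castSucc := by
        apply Fin.ext; simp
      rwa [hjc] at h1
    exact mul_right_cancel₀ (ne_of_gt hcpos) hk
  -- diagonal entries agree
  have hdiag : ∀ i : Fin (n+1), A i i = A' i i := by
    intro i
    rcases Fin.eq_zero_or_eq_succ i with hi0 | ⟨j, hji⟩
    · subst hi0
      have hk := congrFun (key 1) 0
      rw [pow_one, pow_one, aux_mulVec_zero A hA0, aux_mulVec_zero A' hA0'] at hk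
      have hv0 : v 0 = N := by simp [hv]
      have hv0' : v' 0 = N' := by simp [hv']
      rw [hv0, hv0', ← hNN] at hk
      exact mul_right_cancel₀ (ne_of_gt hN) hk
    · subst hji
      have hk := congrFun (key ((j : ℕ) + 2)) j.succ
      have e1 : ((A ^ ((j : ℕ) + 2)) *ᵥ v) j.succ
          = A j.succ j.succ * ((A ^ ((j : ℕ) + 1)) *ᵥ v) j.succ
            + A j.succ j.castSucc * ((A ^ ((j : ℕ) + 1)) *ᵥ v) j.castSucc := by
        rw [show (j : ℕ) + 2 = ((j : ℕ) + 1) + 1 from rfl, pow_succ',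
          ← Matrix.mulVec_mulVec, aux_mulVec_succ A hA0]
      have e1' : ((A' ^ ((j : ℕ) + 2)) *ᵥ v') j.succ
          = A' j.succ j.succ * ((A' ^ ((j : ℕ) + 1)) *ᵥ v') j.succ
            + A' j.succ j.castSucc * ((A' ^ ((j : ℕ) + 1)) *ᵥ v') j.castSucc := by
        rw [show (j : ℕ) + 2 = ((j : ℕ) + 1) + 1 from rfl, pow_succ',
          ← Matrix.mulVec_mulVec, aux_mulVec_succ A' hA0']
      rw [e1, e1'] at hk
      have hcc1 : ((A' ^ ((j : ℕ) + 1)) *ᵥ v') j.succ = ((A ^ ((j : ℕ) + 1)) *ᵥ v) j.succ :=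
        (congrFun (key ((j : ℕ) + 1)) j.succ).symm
      have hcc2 : ((A' ^ ((j : ℕ) + 1)) *ᵥ v') j.castSucc
          = ((A ^ ((j : ℕ) + 1)) *ᵥ v) j.castSucc :=
        (congrFun (key ((j : ℕ) + 1)) j.castSucc).symm
      rw [hcc1, hcc2, ← hsubeq j] at hk
      have hppos : 0 < ((A ^ ((j : ℕ) + 1)) *ᵥ v) j.succ := by
        have h1 := pos ((j : ℕ) + 1) (by omega)
        have hjs : (⟨(j : ℕ) + 1, by omega⟩ : Fin (n+1)) = j.succ := by
          apply Fin.ext; simp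
        rwa [hjs] at h1
      have := add_right_cancel hk
      exact mul_right_cancel₀ (ne_of_gt hppos) this
  -- recover b
  have hbb : b = b' := by
    funext i
    by_cases hi : i = Fin.last n
    · subst hi
      have h1 : A (Fin.last n) (Fin.last n) = b (Fin.last n) := by
        rw [hA, if_pos rfl, hlast]; ring
      have h1' : A' (Fin.last n) (Fin.last n) = b' (Fin.last n) := by
        rw [hA', if_pos rfl, hlast']; ring
      rw [← h1, ← h1', hdiag]
    · have hlt : (i : ℕ) < n := by
        have h1 : (i : ℕ) < n + 1 := i.isLt
        have h2 : (i : ℕ) ≠ n := fun h => hi (Fin.ext (by simp [h]))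
        omega
      set j : Fin n := ⟨(i : ℕ), hlt⟩ with hj
      have hjc : j.castSucc = i := by apply Fin.ext; simp [hj]
      have hd : A i i = (2 * pS i - 1) * b i := by rw [hA, if_pos rfl]
      have hd' : A' i i = (2 * pS' i - 1) * b' i := by rw [hA', if_pos rfl]
      have hs : A j.succ j.castSucc = 2 * (1 - pS j.castSucc) * b j.castSucc := by
        rw [hA, if_neg (by simp [Fin.ext_iff]), if_pos (by simp)]
      have hs' : A' j.succ j.castSucc = 2 * (1 - pS' j.castSucc) * b' j.castSucc := by
        rw [hA', if_neg (by simp [Fin.ext_iff]), if_pos (by simp)]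
      have hbi : b i = A i i + A j.succ j.castSucc := by
        rw [hd, hs, hjc]; ring
      have hbi' : b' i = A' i i + A' j.succ j.castSucc := by
        rw [hd', hs', hjc]; ring
      rw [hbi, hbi', hdiag, hsubeq]
  -- recover pS
  have hpp : pS = pS' := by
    funext i
    by_cases hi : i = Fin.last n
    · subst hi; rw [hlast, hlast']
    · have hd : A i i = (2 * pS i - 1) * b i := by rw [hA, if_pos rfl]
      have hd' : A' i i = (2 * pS' i - 1) * b' i := by rw [hA', if_pos rfl]
      have heq : (2 * pS i - 1) * b i = (2 * pS' i - 1) * b i := by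
        rw [← hd, hdiag i, hd', ← congrFun hbb i]
      have hbne : b i ≠ 0 := ne_of_gt (hb i)
      have := mul_right_cancel₀ hbne heq
      linarith
  exact ⟨hNN, hbb, hpp⟩
end

section
/- Let J ≥ 1 and for each j let dB_j* : dom → ℝ be the Laplace transform of the j-th division-time density, with p_S^{(j)} ∈ (0,1) for j < J, p_S^{(J)} = 1, and intrinsic growth rates μ_j defined by dB_j*(μ_j) = 1/(2p_S^{(j)}). Suppose λ* = max_j μ_j is attained at a unique index c. Then any vector v ∈ ℝ^J satisfying v_j (1 - 2p_S^{(j)} dB_j*(λ*)) = 2 p_L^{(j-1)} dB_{j-1}*(λ*) v_{j-1} for all j (with p_L^{(0)} = 0, p_L^{(j)} = 1 - p_S^{(j)}) must have v_j = 0 for j < c, and is uniquely determined up to scalar by v_c via v_j = v_c ∏_{k=c+1}^{j} [2p_L^{(k-1)} dB_{k-1}*(λ*)] / [1 - 2p_S^{(k)} dB_k*(λ*)] for j > c. -/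
open MeasureTheory Real Set Finset

/-- The Laplace transform of the division-time density `dB(s) = b(s) e^{-∫₀ˢ b}`. -/
noncomputable def laplaceDB (b : ℝ → ℝ) (l : ℝ) : ℝ :=
  ∫ s in Set.Ioi (0:ℝ), Real.exp (-(l * s)) * (b s * Real.exp (-(∫ u in (0:ℝ)..s, b u)))

/-- Strict monotonicity of the Laplace transform in the rate parameter. -/
lemma laplaceDB_strict_anti (b : ℝ → ℝ) (bmin : ℝ) (hb : Continuous b) (hmin : 0 < bmin)
    (hbd : ∀ a : ℝ, 0 ≤ a → bmin ≤ b a)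
    (l l' : ℝ) (hll : l < l')
    (hint : MeasureTheory.IntegrableOn
      (fun s => Real.exp (-(l * s)) * (b s * Real.exp (-(∫ u in (0:ℝ)..s, b u))))
      (Set.Ioi (0:ℝ))) :
    laplaceDB b l' < laplaceDB b l := by
  set g : ℝ → ℝ := fun s => b s * Real.exp (-(∫ u in (0:ℝ)..s, b u)) with hg
  have hgc : Continuous g := by
    apply hb.mul
    exact ((intervalIntegral.continuous_primitive
      (fun a b' => hb.intervalIntegrable a b') 0).neg).rexp
  have hgpos : ∀ s : ℝ, 0 < s → 0 < g s := fun s hs =>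
    mul_pos (lt_of_lt_of_le hmin (hbd s hs.le)) (Real.exp_pos _)
  have hFc : Continuous fun s => Real.exp (-(l' * s)) * g s :=
    ((continuous_const.mul continuous_id).neg.rexp).mul hgc
  have hFc_int : IntegrableOn (fun s => Real.exp (-(l' * s)) * g s) (Set.Ioi 0) := by
    refine Integrable.mono hint hFc.aestronglyMeasurable.restrict ?_
    filter_upwards [ae_restrict_mem measurableSet_Ioi] with s hs
    have hg0 : 0 < g s := hgpos s hs
    have h1 : Real.exp (-(l' * s)) ≤ Real.exp (-(l * s)) := by
      apply Real.exp_le_exp.2; nlinarith [hs.out]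
    rw [Real.norm_eq_abs, Real.norm_eq_abs, abs_of_pos (mul_pos (Real.exp_pos _) hg0),
      abs_of_pos (mul_pos (Real.exp_pos _) hg0)]
    exact mul_le_mul_of_nonneg_right h1 hg0.le
  have hsub : IntegrableOn
      (fun s => Real.exp (-(l * s)) * g s - Real.exp (-(l' * s)) * g s) (Set.Ioi 0) :=
    hint.sub hFc_int
  have hpos : 0 < ∫ s in Set.Ioi (0:ℝ),
      (Real.exp (-(l * s)) * g s - Real.exp (-(l' * s)) * g s) := by
    rw [setIntegral_pos_iff_support_of_nonneg_ae ?_ hsub]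
    · have : Set.Ioi (0:ℝ) ⊆ Function.support
          (fun s => Real.exp (-(l * s)) * g s - Real.exp (-(l' * s)) * g s) := by
        intro s hs
        have hg0 : 0 < g s := hgpos s hs
        have : Real.exp (-(l' * s)) < Real.exp (-(l * s)) := by
          apply Real.exp_lt_exp.2; nlinarith [hs.out]
        simp only [Function.mem_support]
        nlinarith
      have h2 : volume (Function.support
          (fun s => Real.exp (-(l * s)) * g s - Real.exp (-(l' * s)) * g s) ∩ Set.Ioi 0)
          = volume (Set.Ioi (0:ℝ)) := by
        rw [Set.inter_eq_right.2 this]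
      rw [h2]; simp
    · filter_upwards [ae_restrict_mem measurableSet_Ioi] with s hs
      have hg0 : 0 < g s := hgpos s hs
      have : Real.exp (-(l' * s)) ≤ Real.exp (-(l * s)) := by
        apply Real.exp_le_exp.2; nlinarith [hs.out]
      simp only [Pi.zero_apply]
      nlinarith
  have heq : laplaceDB b l - laplaceDB b l' = ∫ s in Set.Ioi (0:ℝ),
      (Real.exp (-(l * s)) * g s - Real.exp (-(l' * s)) * g s) := by
    rw [laplaceDB, laplaceDB, ← integral_sub hint hFc_int]
  linarith [heq ▸ hpos]

/-- Boundary values of the primal eigenfunction of the multilayer eigenproblem: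
any solution `v` of the boundary recursion `C(λ*) v = 0` vanishes upstream of
the leading layer `c`, and downstream it is given explicitly by a product
formula from `v c`. -/
theorem stmt_13 (n : ℕ) (b : Fin (n + 1) → ℝ → ℝ) (bmin bmax : Fin (n + 1) → ℝ)
    (hb : ∀ j, Continuous (b j)) (hmin : ∀ j, 0 < bmin j)
    (hbd : ∀ j, ∀ a : ℝ, 0 ≤ a → bmin j ≤ b j a ∧ b j a ≤ bmax j)
    (pS : Fin (n + 1) → ℝ)
    (hpS : ∀ j : Fin (n + 1), j ≠ Fin.last n → pS j ∈ Set.Ioo (0:ℝ) 1)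
    (hlast : pS (Fin.last n) = 1)
    (μ : Fin (n + 1) → ℝ)
    (hμint : ∀ j, MeasureTheory.IntegrableOn
      (fun s => Real.exp (-(μ j * s)) * (b j s * Real.exp (-(∫ u in (0:ℝ)..s, b j u))))
      (Set.Ioi (0:ℝ)))
    (hμ : ∀ j, laplaceDB (b j) (μ j) = 1 / (2 * pS j))
    (c : Fin (n + 1)) (hc : ∀ j, j ≠ c → μ j < μ c)
    (v : Fin (n + 1) → ℝ)
    (hv0 : v 0 * (1 - 2 * pS 0 * laplaceDB (b 0) (μ c)) = 0)
    (hv : ∀ j : Fin n,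
      v j.succ * (1 - 2 * pS j.succ * laplaceDB (b j.succ) (μ c)) =
        2 * (1 - pS j.castSucc) * laplaceDB (b j.castSucc) (μ c) * v j.castSucc) :
    (∀ j : Fin (n + 1), j < c → v j = 0) ∧
    (∀ j : Fin (n + 1), c < j → v j = v c *
      ∏ k ∈ Finset.Ioc c j,
        (2 * (1 - pS (k - 1)) * laplaceDB (b (k - 1)) (μ c)) /
          (1 - 2 * pS k * laplaceDB (b k) (μ c))) := by
  have hpSpos : ∀ j, 0 < pS j := by
    intro j
    by_cases h : j = Fin.last n
    · rw [h, hlast]; norm_num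
    · exact (hpS j h).1
  have hd : ∀ j : Fin (n + 1), j ≠ c → 0 < 1 - 2 * pS j * laplaceDB (b j) (μ c) := by
    intro j hj
    have hlt := laplaceDB_strict_anti (b j) (bmin j) (hb j) (hmin j)
      (fun a ha => (hbd j a ha).1) (μ j) (μ c) (hc j hj) (hμint j)
    rw [hμ j] at hlt
    have hp := hpSpos j
    rw [lt_div_iff₀ (by positivity)] at hlt
    nlinarith
  have h1 : ∀ j : Fin (n + 1), j < c → v j = 0 := by
    intro j
    induction j using Fin.induction with
    | zero =>
      intro h
      have hdpos := hd 0 (ne_of_lt h)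
      rcases mul_eq_zero.mp hv0 with h0 | h0
      · exact h0
      · exact absurd h0 (ne_of_gt hdpos)
    | succ i ih =>
      intro h
      have hic : i.castSucc < c := lt_trans (Fin.castSucc_lt_succ (i := i)) h
      have hrec := hv i
      rw [ih hic, mul_zero] at hrec
      have hdpos := hd i.succ (ne_of_lt h)
      rcases mul_eq_zero.mp hrec with h0 | h0
      · exact h0
      · exact absurd h0 (ne_of_gt hdpos)
  refine ⟨h1, ?_⟩
  intro j
  induction j using Fin.induction with
  | zero => intro h; exact absurd h (by simp)
  | succ i ih =>
    intro h
    have hle : c ≤ i.castSucc := Fin.le_castSucc_iff.mpr h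
    have hprev : v i.castSucc = v c * ∏ k ∈ Finset.Ioc c i.castSucc,
        (2 * (1 - pS (k - 1)) * laplaceDB (b (k - 1)) (μ c)) /
          (1 - 2 * pS k * laplaceDB (b k) (μ c)) := by
      rcases eq_or_lt_of_le hle with heq | hlt
      · rw [← heq, Finset.Ioc_self, Finset.prod_empty, mul_one]
      · exact ih hlt
    have hne : i.succ ≠ c := ne_of_gt h
    have hdpos := hd i.succ hne
    have hdne : (1 - 2 * pS i.succ * laplaceDB (b i.succ) (μ c)) ≠ 0 := ne_of_gt hdpos
    have hsub1 : i.succ - 1 = i.castSucc := by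
      ext
      simp [Fin.coe_sub_one, Fin.succ_ne_zero]
    have hsplit : Finset.Ioc c i.succ = insert i.succ (Finset.Ioc c i.castSucc) := by
      ext x
      simp only [Finset.mem_Ioc, Finset.mem_insert]
      constructor
      · rintro ⟨hx1, hx2⟩
        rcases eq_or_lt_of_le hx2 with he | hl
        · exact Or.inl he
        · exact Or.inr ⟨hx1, Fin.le_castSucc_iff.mpr hl⟩
      · rintro (rfl | ⟨hx1, hx2⟩)
        · exact ⟨lt_of_le_of_lt hle (Fin.castSucc_lt_succ (i := i)), le_refl _⟩
        · exact ⟨hx1, le_of_lt (Fin.le_castSucc_iff.mp hx2)⟩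
    have hnotmem : i.succ ∉ Finset.Ioc c i.castSucc := by
      simp only [Finset.mem_Ioc, not_and]
      intro _
      exact fun hx => absurd (lt_of_lt_of_le (Fin.castSucc_lt_succ (i := i)) hx) (lt_irrefl _)
    have hrec := hv i
    have hstep : v i.succ =
        (2 * (1 - pS (i.succ - 1)) * laplaceDB (b (i.succ - 1)) (μ c)) /
          (1 - 2 * pS i.succ * laplaceDB (b i.succ) (μ c)) * v i.castSucc := by
      rw [hsub1]
      field_simp
      linarith [hrec]
    rw [hsplit, Finset.prod_insert hnotmem, hstep, hprev]
    ring
end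

section
/- Let G be a probability distribution function on (0,∞) with G(0+)=0, not supported on a lattice, m ∈ (0,1), and f : [0,∞) → ℝ a bounded measurable function with lim_{t→∞} f(t) = c. If K is a bounded solution of the renewal equation K(t) = f(t) + m ∫₀ᵗ K(t-u) dG(u), then lim_{t→∞} K(t) = c/(1-m). -/
open MeasureTheory Real Set Filter

/-- Harris's subcritical renewal lemma: if `K` is a bounded solution of
`K(t) = f(t) + m ∫₀ᵗ K(t-u) dG(u)` with `m ∈ (0,1)`, `G` a non-lattice
probability distribution on `(0,∞)`, and `f(t) → c`, then
`K(t) → c/(1-m)`. -/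
theorem stmt_15 (ν : MeasureTheory.Measure ℝ) [MeasureTheory.IsProbabilityMeasure ν]
    (hν0 : ν (Set.Iic (0:ℝ)) = 0)
    (hlattice : ¬ ∃ d : ℝ, 0 < d ∧ ∀ᵐ x ∂ν, ∃ k : ℕ, x = (k : ℝ) * d)
    (m : ℝ) (hm : m ∈ Set.Ioo (0:ℝ) 1)
    (c : ℝ) (f : ℝ → ℝ) (hfm : Measurable f)
    (hfb : ∃ C : ℝ, ∀ t : ℝ, |f t| ≤ C)
    (hfc : Filter.Tendsto f Filter.atTop (nhds c))
    (K : ℝ → ℝ) (hKm : Measurable K)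
    (hKb : ∃ C : ℝ, ∀ t : ℝ, |K t| ≤ C)
    (hK : ∀ t : ℝ, 0 ≤ t → K t = f t + m * ∫ u in Set.Icc 0 t, K (t - u) ∂ν) :
    Filter.Tendsto K Filter.atTop (nhds (c / (1 - m))) := by
  obtain ⟨hm0, hm1⟩ := hm
  obtain ⟨C, hC⟩ := hKb
  set κ : ℝ := c / (1 - m) with hκdef
  have hκc : κ * (1 - m) = c := by
    rw [hκdef, div_mul_cancel₀ _ (by linarith : (1:ℝ) - m ≠ 0)]
  set D : ℝ → ℝ := fun t => K t - κ with hDdef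
  have hDm : Measurable D := hKm.sub measurable_const
  set C' : ℝ := C + |κ| with hC'def
  have hC0 : 0 ≤ C := le_trans (abs_nonneg _) (hC 0)
  have hC'0 : 0 ≤ C' := by positivity
  have hDb : ∀ t, |D t| ≤ C' := fun t =>
    (abs_sub _ _).trans (add_le_add (hC t) le_rfl)
  -- integrability of shifted bounded measurable functions
  have hint : ∀ (g : ℝ → ℝ), Measurable g → (∀ x, |g x| ≤ C') →
      ∀ (t : ℝ) (s : Set ℝ), IntegrableOn (fun u => g (t - u)) s ν := by
    intro g hg hgb t s
    refine Integrable.mono' (integrable_const C') ?_ ?_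
    · exact ((hg.comp (measurable_const.sub measurable_id)).aestronglyMeasurable)
    · exact Filter.Eventually.of_forall fun u => by
        rw [Real.norm_eq_abs]; exact hgb _
  have hKb' : ∀ t, |K t| ≤ C' := fun t => (hC t).trans (le_add_of_nonneg_right (abs_nonneg _))
  -- measure facts
  have hν1 : ∀ t : ℝ, 0 ≤ t → (ν (Set.Icc 0 t)).toReal = 1 - (ν (Set.Ioi t)).toReal := by
    intro t ht
    have h1 : ν (Set.Icc 0 t) = ν (Set.Iic t) := by
      apply le_antisymm (measure_mono Set.Icc_subset_Iic_self)
      have : Set.Iic t ⊆ Set.Iic (0:ℝ) ∪ Set.Icc 0 t := by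
        intro x hx
        rcases le_or_gt x 0 with h | h
        · exact Or.inl h
        · exact Or.inr ⟨h.le, hx⟩
      calc ν (Set.Iic t) ≤ ν (Set.Iic (0:ℝ) ∪ Set.Icc 0 t) := measure_mono this
        _ ≤ ν (Set.Iic (0:ℝ)) + ν (Set.Icc 0 t) := measure_union_le _ _
        _ = ν (Set.Icc 0 t) := by rw [hν0, zero_add]
    have h2 : ν (Set.Iic t) + ν (Set.Ioi t) = 1 := by
      rw [← Set.compl_Iic, measure_add_measure_compl measurableSet_Iic, measure_univ]
    have hfin : ν (Set.Ioi t) ≠ ⊤ := measure_ne_top ν _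
    have hfin2 : ν (Set.Iic t) ≠ ⊤ := measure_ne_top ν _
    have := congrArg ENNReal.toReal h2
    rw [ENNReal.toReal_add hfin2 hfin, ENNReal.toReal_one] at this
    rw [h1]
    linarith
  have hνle1 : ∀ s : Set ℝ, (ν s).toReal ≤ 1 := by
    intro s
    have h := prob_le_one (μ := ν) (s := s)
    have := ENNReal.toReal_mono ENNReal.one_ne_top h
    simpa using this
  -- the renewal equation for D
  have heq : ∀ t : ℝ, 0 ≤ t →
      D t = (f t - c) - m * κ * (ν (Set.Ioi t)).toReal
        + m * ∫ u in Set.Icc 0 t, D (t - u) ∂ν := by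
    intro t ht
    have hIK := hint K hKm hKb' t (Set.Icc 0 t)
    have hsplit : ∫ u in Set.Icc 0 t, K (t - u) ∂ν
        = (∫ u in Set.Icc 0 t, D (t - u) ∂ν) + κ * (ν (Set.Icc 0 t)).toReal := by
      have : ∀ u : ℝ, K (t - u) = D (t - u) + κ := by
        intro u; simp [hDdef]
      rw [show (fun u => K (t-u)) = fun u => D (t-u) + κ from funext this]
      rw [integral_add (hint D hDm hDb t _) (integrable_const κ)]
      simp [Measure.restrict_apply_univ, mul_comm, measureReal_def]
    have hKt := hK t ht
    rw [hsplit, hν1 t ht] at hKt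
    simp only [hDdef]
    rw [hKt]
    ring_nf
    have e : (∫ u in Set.Icc 0 t, -κ + K (t - u) ∂ν) = ∫ u in Set.Icc 0 t, D (t - u) ∂ν := by
      congr 1; funext u; simp only [hDdef]; ring
    rw [e]
    nlinarith [hκc]
  -- limsup of |D|
  set S : ℝ := Filter.limsup (fun t => |D t|) Filter.atTop with hSdef
  have hbdd : Filter.IsBoundedUnder (· ≤ ·) Filter.atTop (fun t => |D t|) :=
    Filter.isBoundedUnder_of ⟨C', fun t => hDb t⟩
  have hbdd0 : Filter.IsBoundedUnder (· ≥ ·) Filter.atTop (fun t => |D t|) :=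
    Filter.isBoundedUnder_of ⟨0, fun t => abs_nonneg _⟩
  have hcobdd : Filter.IsCoboundedUnder (· ≤ ·) Filter.atTop (fun t => |D t|) :=
    hbdd0.isCoboundedUnder_le
  have hS0 : 0 ≤ S :=
    Filter.le_limsup_of_frequently_le
      (Filter.Frequently.of_forall fun t => abs_nonneg _) hbdd
  have hSC : S ≤ C' :=
    Filter.limsup_le_of_le hcobdd (Filter.Eventually.of_forall fun t => hDb t)
  -- tail of ν tends to 0
  have htail : Filter.Tendsto (fun A => (ν (Set.Ioi A)).toReal) Filter.atTop (nhds 0) := by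
    have h1 : Filter.Tendsto (fun A => (ν (Set.Iic A)).toReal) Filter.atTop (nhds 1) := by
      have := MeasureTheory.tendsto_measure_Iic_atTop (μ := ν)
      rw [measure_univ] at this
      have := (ENNReal.tendsto_toReal ENNReal.one_ne_top).comp this
      simpa [Function.comp_def] using this
    have heqt : ∀ A : ℝ, (ν (Set.Ioi A)).toReal = 1 - (ν (Set.Iic A)).toReal := by
      intro A
      have h2 : ν (Set.Iic A) + ν (Set.Ioi A) = 1 := by
        rw [← Set.compl_Iic, measure_add_measure_compl measurableSet_Iic, measure_univ]
      have := congrArg ENNReal.toReal h2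
      rw [ENNReal.toReal_add (measure_ne_top ν _) (measure_ne_top ν _),
        ENNReal.toReal_one] at this
      linarith
    rw [show (fun A => (ν (Set.Ioi A)).toReal) = fun A => 1 - (ν (Set.Iic A)).toReal
      from funext heqt]
    have := h1.const_sub 1
    simpa using this
  -- main estimate: S ≤ m * S + M * ε for every ε > 0
  set M : ℝ := 1 + |m * κ| + m + m * C' with hMdef
  have hM0 : 0 < M := by positivity
  have hmain : ∀ ε : ℝ, 0 < ε → S ≤ m * S + M * ε := by
    intro ε hε
    -- get T₀ for D
    obtain ⟨T₀, hT₀⟩ := Filter.eventually_atTop.1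
      (Filter.eventually_lt_of_limsup_lt (by linarith : S < S + ε) hbdd)
    -- get A for the tail
    obtain ⟨A₀, hA₀⟩ := Filter.eventually_atTop.1
      (htail.eventually (gt_mem_nhds hε))
    set A : ℝ := max A₀ 0 with hAdef
    have hA : (ν (Set.Ioi A)).toReal < ε := hA₀ A (le_max_left _ _)
    have hA0 : 0 ≤ A := le_max_right _ _
    -- get T₁ for f
    obtain ⟨T₁, hT₁⟩ := Filter.eventually_atTop.1
      (hfc.eventually (Metric.ball_mem_nhds c hε))
    -- pointwise bound for large t
    have hptwise : ∀ t : ℝ, max (max (T₀ + A) T₁) A ≤ t →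
        |D t| ≤ m * S + M * ε := by
      intro t htge
      have ht1 : T₀ + A ≤ t := le_trans (le_max_left _ _) (le_trans (le_max_left _ _) htge)
      have ht2 : T₁ ≤ t := le_trans (le_max_right _ _) (le_trans (le_max_left _ _) htge)
      have ht3 : A ≤ t := le_trans (le_max_right _ _) htge
      have ht0 : 0 ≤ t := le_trans hA0 ht3
      -- split the integral
      have hdecomp : Set.Icc (0:ℝ) t = Set.Icc 0 A ∪ Set.Ioc A t := by
        rw [Set.Icc_union_Ioc_eq_Icc hA0 ht3]
      have hdisj : Disjoint (Set.Icc (0:ℝ) A) (Set.Ioc A t) :=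
        Set.disjoint_left.2 fun x hx hx' => absurd hx.2 (not_le.2 hx'.1)
      have hIsplit : ∫ u in Set.Icc 0 t, D (t - u) ∂ν
          = (∫ u in Set.Icc 0 A, D (t - u) ∂ν) + ∫ u in Set.Ioc A t, D (t - u) ∂ν := by
        rw [hdecomp]
        exact MeasureTheory.setIntegral_union hdisj measurableSet_Ioc
          (hint D hDm hDb t _) (hint D hDm hDb t _)
      -- bound part 1
      have hb1 : |∫ u in Set.Icc 0 A, D (t - u) ∂ν| ≤ S + ε := by
        have := MeasureTheory.norm_setIntegral_le_of_norm_le_const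
          (C := S + ε) (s := Set.Icc (0:ℝ) A) (μ := ν) (f := fun u => D (t - u))
          (measure_lt_top ν _) ?_
        · rw [Real.norm_eq_abs] at this
          refine this.trans ?_
          calc (S + ε) * (ν (Set.Icc 0 A)).toReal ≤ (S + ε) * 1 :=
            mul_le_mul_of_nonneg_left (hνle1 _) (by linarith)
            _ = S + ε := mul_one _
        · intro u hu
          rw [Real.norm_eq_abs]
          have : T₀ ≤ t - u := by
            obtain ⟨hu0, huA⟩ := hu
            linarith
          exact (hT₀ _ this).le
      -- bound part 2
      have hb2 : |∫ u in Set.Ioc A t, D (t - u) ∂ν| ≤ C' * ε := by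
        have := MeasureTheory.norm_setIntegral_le_of_norm_le_const
          (C := C') (s := Set.Ioc A t) (μ := ν) (f := fun u => D (t - u))
          (measure_lt_top ν _) ?_
        · rw [Real.norm_eq_abs] at this
          refine this.trans ?_
          have hmono : (ν (Set.Ioc A t)).toReal ≤ (ν (Set.Ioi A)).toReal :=
            ENNReal.toReal_mono (measure_ne_top ν _)
              (measure_mono Set.Ioc_subset_Ioi_self)
          have : (ν (Set.Ioc A t)).toReal ≤ ε := le_trans hmono hA.le
          exact mul_le_mul_of_nonneg_left this hC'0
        · intro u _
          rw [Real.norm_eq_abs]; exact hDb _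
      -- the f bound
      have hbf : |f t - c| < ε := by
        have := hT₁ t ht2
        rwa [Real.dist_eq] at this
      -- the tail bound at t
      have hbt : (ν (Set.Ioi t)).toReal < ε := by
        refine lt_of_le_of_lt ?_ hA
        exact ENNReal.toReal_mono (measure_ne_top ν _)
          (measure_mono (Set.Ioi_subset_Ioi ht3))
      -- combine
      have := heq t ht0
      rw [hIsplit] at this
      have habs : |D t| ≤ |f t - c| + |m * κ| * (ν (Set.Ioi t)).toReal
          + m * (|∫ u in Set.Icc 0 A, D (t - u) ∂ν| + |∫ u in Set.Ioc A t, D (t - u) ∂ν|) := by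
        rw [this]
        calc |f t - c - m * κ * (ν (Set.Ioi t)).toReal
              + m * ((∫ u in Set.Icc 0 A, D (t - u) ∂ν) + ∫ u in Set.Ioc A t, D (t - u) ∂ν)|
            ≤ |f t - c| + |m * κ * (ν (Set.Ioi t)).toReal|
              + |m * ((∫ u in Set.Icc 0 A, D (t - u) ∂ν) + ∫ u in Set.Ioc A t, D (t - u) ∂ν)| := by
              exact (abs_add_le _ _).trans (add_le_add_left (abs_sub _ _) _)
          _ ≤ |f t - c| + |m * κ| * (ν (Set.Ioi t)).toReal
              + m * (|∫ u in Set.Icc 0 A, D (t - u) ∂ν| + |∫ u in Set.Ioc A t, D (t - u) ∂ν|) := by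
              gcongr
              · rw [abs_mul, abs_of_nonneg ENNReal.toReal_nonneg]
              · rw [abs_mul, abs_of_nonneg hm0.le]
                exact mul_le_mul_of_nonneg_left (abs_add_le _ _) hm0.le
      have hνt0 : (0:ℝ) ≤ (ν (Set.Ioi t)).toReal := ENNReal.toReal_nonneg
      have hκν : |m * κ| * (ν (Set.Ioi t)).toReal ≤ |m * κ| * ε :=
        mul_le_mul_of_nonneg_left hbt.le (abs_nonneg _)
      nlinarith [abs_nonneg (∫ u in Set.Icc 0 A, D (t - u) ∂ν),
        abs_nonneg (∫ u in Set.Ioc A t, D (t - u) ∂ν),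
        mul_le_mul_of_nonneg_left (add_le_add hb1 hb2) hm0.le]
    -- take limsup
    refine Filter.limsup_le_of_le hcobdd ?_
    exact Filter.eventually_atTop.2 ⟨_, hptwise⟩
  -- conclude S = 0
  have hSm : S ≤ m * S := by
    by_contra h
    push_neg at h
    have hpos : 0 < S - m * S := by linarith
    have := hmain ((S - m * S) / (2 * M)) (div_pos hpos (by positivity))
    have hMne : M ≠ 0 := ne_of_gt hM0
    have h2M : M * ((S - m * S) / (2 * M)) = (S - m * S) / 2 := by
      field_simp
    rw [h2M] at this
    linarith
  have hSz : S = 0 := le_antisymm (by nlinarith) hS0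
  -- deduce tendsto
  have hDto : Filter.Tendsto (fun t => |D t|) Filter.atTop (nhds 0) := by
    rw [Metric.tendsto_atTop]
    intro ε hε
    have : S < ε := by rw [hSz]; exact hε
    obtain ⟨N, hN⟩ := Filter.eventually_atTop.1
      (Filter.eventually_lt_of_limsup_lt this hbdd)
    refine ⟨N, fun t ht => ?_⟩
    rw [Real.dist_eq, sub_zero, abs_abs]
    exact hN t ht
  have : Filter.Tendsto (fun t => ‖K t - κ‖) Filter.atTop (nhds 0) := by
    simpa [Real.norm_eq_abs, hDdef] using hDto
  exact tendsto_iff_norm_sub_tendsto_zero.2 this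
end

section
/- Consider a single-layer Bellman–Harris process with constant division rate b > 0 (exponential lifetimes), where at division both daughters remain with probability p_{2,0} and p_S = p_{2,0} + p_{1,1}/2, and let μ = (2p_S - 1)b be its Malthus parameter, assumed positive. Let M(t) be the mean number of cells at time t starting from one cell of age 0, and L(t) the second moment. Then L(t) e^{-2μt} converges as t → ∞ to [2p_{2,0} dB*(2μ) m̃²] / [1 - 2p_S dB*(2μ)], where dB*(λ) = b/(b+λ) and m̃ = lim M(t)e^{-μt}; consequently the limiting normalized variance is ṽ = [2p_{2,0} dB*(2μ)/(1 - 2p_S dB*(2μ)) - 1] m̃². -/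
open MeasureTheory Real Set Filter intervalIntegral

lemma exp_int (c : ℝ) (hc : c ≠ 0) (t : ℝ) :
    ∫ s in (0:ℝ)..t, Real.exp (c * s) = (Real.exp (c * t) - 1) / c := by
  have h : ∀ x ∈ uIcc (0:ℝ) t, HasDerivAt (fun x => Real.exp (c * x) / c)
      (Real.exp (c * x)) x := by
    intro x _
    have h1 : HasDerivAt (fun x : ℝ => c * x) (c * 1) x := (hasDerivAt_id x).const_mul c
    have h2 := (h1.exp).div_const c
    refine h2.congr_deriv ?_
    field_simp
  rw [intervalIntegral.integral_eq_sub_of_hasDerivAt h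
    ((Real.continuous_exp.comp (continuous_const.mul continuous_id)).intervalIntegrable 0 t)]
  simp [mul_zero, Real.exp_zero]
  ring

lemma conv_transform (b : ℝ) (f : ℝ → ℝ) (t : ℝ) :
    (∫ u in (0:ℝ)..t, f (t - u) * (b * Real.exp (-(b * u)))) =
      b * Real.exp (-(b * t)) * ∫ s in (0:ℝ)..t, f s * Real.exp (b * s) := by
  have key := intervalIntegral.integral_comp_sub_left
      (fun s => f s * (b * Real.exp (-(b * (t - s))))) t (a := 0) (b := t)
  simp only [sub_self, sub_zero] at key
  have h1 : (∫ u in (0:ℝ)..t, f (t - u) * (b * Real.exp (-(b * u)))) =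
      ∫ u in (0:ℝ)..t, (fun s => f s * (b * Real.exp (-(b * (t - s))))) (t - u) := by
    congr 1 with u
    simp only [sub_sub_cancel]
  rw [h1, key]
  rw [show (b * Real.exp (-(b * t)) * ∫ s in (0:ℝ)..t, f s * Real.exp (b * s)) =
      ∫ s in (0:ℝ)..t, b * Real.exp (-(b * t)) * (f s * Real.exp (b * s)) from
    (intervalIntegral.integral_const_mul _ _).symm]
  congr 1 with s
  rw [show -(b * (t - s)) = -(b * t) + b * s by ring, Real.exp_add]
  ring

lemma uniq_zero (K b : ℝ) (D : ℝ → ℝ) (hD : Continuous D)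
    (h : ∀ t, 0 ≤ t → D t = K * Real.exp (-(b * t)) * ∫ s in (0:ℝ)..t, D s * Real.exp (b * s)) :
    ∀ t, 0 ≤ t → D t = 0 := by
  set g : ℝ → ℝ := fun s => D s * Real.exp (b * s) with hg
  have hgc : Continuous g := hD.mul (Real.continuous_exp.comp (continuous_const.mul continuous_id))
  set H : ℝ → ℝ := fun t => ∫ s in (0:ℝ)..t, g s with hHdef
  have hH : ∀ t, HasDerivAt H (g t) t := fun t =>
    (hgc.integral_hasStrictDerivAt 0 t).hasDerivAt
  have hH0 : H 0 = 0 := by simp [hHdef]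
  have hJd : ∀ t, 0 ≤ t → HasDerivAt (fun t => H t * Real.exp (-(K * t))) 0 t := by
    intro t ht
    have h1 : HasDerivAt (fun t : ℝ => -(K * t)) (-K) t := by
      simpa [Pi.neg_def] using ((hasDerivAt_id t).const_mul K).neg
    have h2 := (hH t).mul h1.exp
    have hval : g t * Real.exp (-(K * t)) + H t * (Real.exp (-(K * t)) * -K) = 0 := by
      have hDt := h t ht
      have : g t = K * H t := by
        have he : Real.exp (-(b * t)) * Real.exp (b * t) = 1 := by
          rw [← Real.exp_add]; simp
        show D t * Real.exp (b * t) = K * H t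
        rw [hDt]
        have hHt : H t = intervalIntegral g 0 t volume := rfl
        rw [hHt]
        linear_combination K * intervalIntegral g 0 t volume * he
      rw [this]; ring
    rw [← hval]
    exact h2
  have hJzero : ∀ t, 0 ≤ t → H t * Real.exp (-(K * t)) = 0 := by
    intro t ht
    rcases eq_or_lt_of_le ht with rfl | ht'
    · simp [hH0]
    · have := eq_of_has_deriv_right_eq (f := fun t => H t * Real.exp (-(K * t)))
        (g := fun _ => (0:ℝ)) (f' := fun _ => (0:ℝ)) (a := 0) (b := t)
        (fun x hx => (hJd x hx.1).hasDerivWithinAt)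
        (fun x _ => (hasDerivAt_const x (0:ℝ)).hasDerivWithinAt)
        (by
          have hHc : Continuous H := continuous_iff_continuousAt.mpr fun x => (hH x).continuousAt
          exact (hHc.mul (Real.continuous_exp.comp
            (continuous_const.mul continuous_id).neg)).continuousOn)
        continuousOn_const (by simp [hH0])
      exact this t (Set.mem_Icc.mpr ⟨ht, le_refl t⟩)
  intro t ht
  have hHt : H t = 0 := by
    have := hJzero t ht
    have hne : Real.exp (-(K * t)) ≠ 0 := Real.exp_ne_zero _
    exact (mul_eq_zero.mp this).resolve_right hne
  rw [h t ht]
  simp [hHdef] at hHt ⊢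
  simp [hHt]

/-- Asymptotic second moment and variance of a supercritical single-layer
Markov branching process with constant division rate `b`, division-time
density `dB(t) = b e^{-bt}`, self-renewal probability `p_S = p_{2,0} + p_{1,1}/2`
and Malthus parameter `μ = (2p_S - 1)b > 0`: with `dB*(λ) = b/(b+λ)`,
`L(t) e^{-2μt} → 2 p_{2,0} dB*(2μ) m̃² / (1 - 2 p_S dB*(2μ))`, and the
normalized variance converges to
`(2 p_{2,0} dB*(2μ)/(1 - 2 p_S dB*(2μ)) - 1) m̃²`. -/
theorem stmt_17 (b : ℝ) (hb : 0 < b)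
    (p20 p11 p02 : ℝ) (hp20 : 0 ≤ p20) (hp11 : 0 ≤ p11) (hp02 : 0 ≤ p02)
    (hsum : p20 + p11 + p02 = 1)
    (pS μ : ℝ) (hpS : pS = p20 + p11 / 2) (hμ : μ = (2 * pS - 1) * b) (hμpos : 0 < μ)
    (M L : ℝ → ℝ) (hMcont : Continuous M) (hLcont : Continuous L)
    (hM : ∀ t : ℝ, 0 ≤ t →
      M t = Real.exp (-(b * t)) +
        2 * pS * ∫ u in (0:ℝ)..t, M (t - u) * (b * Real.exp (-(b * u))))
    (hL : ∀ t : ℝ, 0 ≤ t →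
      L t = Real.exp (-(b * t)) +
        2 * pS * (∫ u in (0:ℝ)..t, L (t - u) * (b * Real.exp (-(b * u)))) +
        2 * p20 * (∫ u in (0:ℝ)..t, (M (t - u)) ^ 2 * (b * Real.exp (-(b * u)))))
    (mtil : ℝ)
    (hmtil : Filter.Tendsto (fun t => M t * Real.exp (-(μ * t))) Filter.atTop (nhds mtil)) :
    Filter.Tendsto (fun t => L t * Real.exp (-(2 * μ * t))) Filter.atTop
      (nhds (2 * p20 * (b / (b + 2 * μ)) * mtil ^ 2 /
        (1 - 2 * pS * (b / (b + 2 * μ))))) ∧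
    Filter.Tendsto (fun t => (L t - (M t) ^ 2) * Real.exp (-(2 * μ * t))) Filter.atTop
      (nhds ((2 * p20 * (b / (b + 2 * μ)) / (1 - 2 * pS * (b / (b + 2 * μ))) - 1) *
        mtil ^ 2)) := by
  have hce : ∀ c : ℝ, Continuous fun s : ℝ => Real.exp (c * s) :=
    fun c => Real.continuous_exp.comp (continuous_const.mul continuous_id)
  have hμne : μ ≠ 0 := ne_of_gt hμpos
  have hμb : (0:ℝ) < μ + b := by linarith
  have h2μb : (0:ℝ) < 2 * μ + b := by linarith
  have hmb : 2 * pS * b = μ + b := by linear_combination -hμ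
  -- Step 1: M t = exp (μ t) for t ≥ 0
  have hMeq : ∀ t, (0:ℝ) ≤ t → M t - Real.exp (μ * t) =
      (2 * pS * b) * Real.exp (-(b * t)) *
        ∫ s in (0:ℝ)..t, (M s - Real.exp (μ * s)) * Real.exp (b * s) := by
    intro t ht
    have hsplit : (∫ s in (0:ℝ)..t, (M s - Real.exp (μ * s)) * Real.exp (b * s)) =
        (∫ s in (0:ℝ)..t, M s * Real.exp (b * s)) -
          ∫ s in (0:ℝ)..t, Real.exp ((μ + b) * s) := by
      rw [← intervalIntegral.integral_sub (f := fun s => M s * Real.exp (b * s))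
        (g := fun s => Real.exp ((μ + b) * s))
        ((hMcont.mul (hce b)).intervalIntegrable 0 t)
        ((hce (μ + b)).intervalIntegrable 0 t)]
      apply intervalIntegral.integral_congr
      intro s _
      simp only
      rw [show (μ + b) * s = μ * s + b * s by ring, Real.exp_add]
      ring
    have hQ : (μ + b) * (∫ s in (0:ℝ)..t, Real.exp ((μ + b) * s)) =
        Real.exp ((μ + b) * t) - 1 := by
      rw [exp_int (μ + b) (ne_of_gt hμb) t]
      field_simp
    have hexp1 : Real.exp (-(b * t)) * Real.exp ((μ + b) * t) = Real.exp (μ * t) := by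
      rw [← Real.exp_add]; congr 1; ring
    rw [hM t ht, conv_transform b M t, hsplit]
    linear_combination (Real.exp (-(b * t)) * (∫ s in (0:ℝ)..t, Real.exp ((μ + b) * s))) * hmb
      + Real.exp (-(b * t)) * hQ + hexp1
  have hMexp : ∀ t, (0:ℝ) ≤ t → M t = Real.exp (μ * t) := by
    intro t ht
    have := uniq_zero (2 * pS * b) b (fun t => M t - Real.exp (μ * t))
      (hMcont.sub (hce μ)) hMeq t ht
    linarith
  -- mtil = 1
  have hmtil1 : mtil = 1 := by
    refine tendsto_nhds_unique hmtil ?_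
    refine Tendsto.congr' ?_ (tendsto_const_nhds : Tendsto (fun _ : ℝ => (1:ℝ)) atTop (nhds 1))
    filter_upwards [eventually_ge_atTop (0:ℝ)] with t ht
    rw [hMexp t ht, ← Real.exp_add]
    simp
  -- Step 2: L t = exp (μ t) + r (exp (2 μ t) - exp (μ t)) for t ≥ 0
  set r : ℝ := 2 * p20 * b / μ with hrdef
  have hr : μ * r = 2 * p20 * b := by rw [hrdef]; field_simp
  set L0 : ℝ → ℝ :=
    fun t => Real.exp (μ * t) + r * (Real.exp (2 * μ * t) - Real.exp (μ * t)) with hL0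
  have hL0cont : Continuous L0 := (hce μ).add (continuous_const.mul ((hce (2 * μ)).sub (hce μ)))
  have hLeq : ∀ t, (0:ℝ) ≤ t → L t - L0 t =
      (2 * pS * b) * Real.exp (-(b * t)) *
        ∫ s in (0:ℝ)..t, (L s - L0 s) * Real.exp (b * s) := by
    intro t ht
    have hMsq : (∫ u in (0:ℝ)..t, (M (t - u)) ^ 2 * (b * Real.exp (-(b * u)))) =
        b * Real.exp (-(b * t)) * ∫ s in (0:ℝ)..t, Real.exp ((2 * μ + b) * s) := by
      rw [conv_transform b (fun s => (M s) ^ 2) t]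
      congr 1
      apply intervalIntegral.integral_congr
      intro s hs
      rw [Set.uIcc_of_le ht] at hs
      simp only
      rw [hMexp s hs.1, pow_two, ← Real.exp_add, ← Real.exp_add]
      congr 1; ring
    have hsplit : (∫ s in (0:ℝ)..t, (L s - L0 s) * Real.exp (b * s)) =
        (∫ s in (0:ℝ)..t, L s * Real.exp (b * s)) -
          ((1 - r) * (∫ s in (0:ℝ)..t, Real.exp ((μ + b) * s)) +
            r * ∫ s in (0:ℝ)..t, Real.exp ((2 * μ + b) * s)) := by
      rw [← intervalIntegral.integral_const_mul, ← intervalIntegral.integral_const_mul,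
        ← intervalIntegral.integral_add (f := fun s => (1 - r) * Real.exp ((μ + b) * s))
          (g := fun s => r * Real.exp ((2 * μ + b) * s))
          ((continuous_const.mul (hce (μ + b))).intervalIntegrable 0 t)
          ((continuous_const.mul (hce (2 * μ + b))).intervalIntegrable 0 t),
        ← intervalIntegral.integral_sub (f := fun s => L s * Real.exp (b * s))
          (g := fun s => (1 - r) * Real.exp ((μ + b) * s) + r * Real.exp ((2 * μ + b) * s))
          ((hLcont.mul (hce b)).intervalIntegrable 0 t)
          (((continuous_const.mul (hce (μ + b))).add
            (continuous_const.mul (hce (2 * μ + b)))).intervalIntegrable 0 t)]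
      apply intervalIntegral.integral_congr
      intro s _
      simp only [hL0]
      rw [show (μ + b) * s = μ * s + b * s by ring,
        show (2 * μ + b) * s = 2 * μ * s + b * s by ring, Real.exp_add, Real.exp_add]
      ring
    have hQ1 : (μ + b) * (∫ s in (0:ℝ)..t, Real.exp ((μ + b) * s)) =
        Real.exp ((μ + b) * t) - 1 := by
      rw [exp_int (μ + b) (ne_of_gt hμb) t]; field_simp
    have hQ2 : (2 * μ + b) * (∫ s in (0:ℝ)..t, Real.exp ((2 * μ + b) * s)) =
        Real.exp ((2 * μ + b) * t) - 1 := by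
      rw [exp_int (2 * μ + b) (ne_of_gt h2μb) t]; field_simp
    have hexp1 : Real.exp (-(b * t)) * Real.exp ((μ + b) * t) = Real.exp (μ * t) := by
      rw [← Real.exp_add]; congr 1; ring
    have hexp2 : Real.exp (-(b * t)) * Real.exp ((2 * μ + b) * t) = Real.exp (2 * μ * t) := by
      rw [← Real.exp_add]; congr 1; ring
    rw [hL t ht, conv_transform b L t, hMsq, hsplit]
    simp only [hL0]
    linear_combination
      (Real.exp (-(b * t)) * (1 - r) * (∫ s in (0:ℝ)..t, Real.exp ((μ + b) * s))
        + Real.exp (-(b * t)) * r * (∫ s in (0:ℝ)..t, Real.exp ((2 * μ + b) * s))) * hmb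
      - (Real.exp (-(b * t)) * (∫ s in (0:ℝ)..t, Real.exp ((2 * μ + b) * s))) * hr
      + ((1 - r) * Real.exp (-(b * t))) * hQ1
      + (r * Real.exp (-(b * t))) * hQ2
      + (1 - r) * hexp1 + r * hexp2
  have hLexp : ∀ t, (0:ℝ) ≤ t → L t = L0 t := by
    intro t ht
    have := uniq_zero (2 * pS * b) b (fun t => L t - L0 t)
      (hLcont.sub hL0cont) hLeq t ht
    linarith
  -- limits
  have hexp0 : Tendsto (fun t => Real.exp (-(μ * t))) atTop (nhds 0) := by
    apply Real.tendsto_exp_atBot.comp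
    exact tendsto_neg_atTop_atBot.comp (Tendsto.const_mul_atTop hμpos tendsto_id)
  have hlim1 : Tendsto (fun t => L t * Real.exp (-(2 * μ * t))) atTop (nhds r) := by
    have h0 : Tendsto (fun t => (1 - r) * Real.exp (-(μ * t)) + r) atTop
        (nhds ((1 - r) * 0 + r)) := (tendsto_const_nhds.mul hexp0).add tendsto_const_nhds
    rw [mul_zero, zero_add] at h0
    refine h0.congr' ?_
    filter_upwards [eventually_ge_atTop (0:ℝ)] with t ht
    rw [hLexp t ht]
    simp only [hL0]
    have h1 : Real.exp (μ * t) * Real.exp (-(2 * μ * t)) = Real.exp (-(μ * t)) := by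
      rw [← Real.exp_add]; congr 1; ring
    have h2 : Real.exp (2 * μ * t) * Real.exp (-(2 * μ * t)) = 1 := by
      rw [← Real.exp_add]; simp
    linear_combination (r - 1) * h1 - r * h2
  have hb2 : b + 2 * μ ≠ 0 := by positivity
  have hdenne : (1:ℝ) - 2 * pS * (b / (b + 2 * μ)) = μ / (b + 2 * μ) := by
    field_simp
    linear_combination -hmb
  have hT1 : 2 * p20 * (b / (b + 2 * μ)) * mtil ^ 2 /
      (1 - 2 * pS * (b / (b + 2 * μ))) = r := by
    rw [hdenne, hmtil1, hrdef]
    field_simp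
  have hT2 : (2 * p20 * (b / (b + 2 * μ)) / (1 - 2 * pS * (b / (b + 2 * μ))) - 1) *
      mtil ^ 2 = r - mtil ^ 2 := by
    rw [hdenne, hmtil1, hrdef]
    field_simp
  constructor
  · rw [hT1]; exact hlim1
  · rw [hT2]
    have halg : ∀ t : ℝ, (L t - (M t) ^ 2) * Real.exp (-(2 * μ * t)) =
        L t * Real.exp (-(2 * μ * t)) - (M t * Real.exp (-(μ * t))) ^ 2 := by
      intro t
      have h2 : Real.exp (-(μ * t)) ^ 2 = Real.exp (-(2 * μ * t)) := by
        rw [pow_two, ← Real.exp_add]; congr 1; ring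
      linear_combination (M t) ^ 2 * h2
    exact Tendsto.congr (fun t => (halg t).symm) (hlim1.sub (hmtil.pow 2))
end

section
/- Let ρ : [0,∞) × [0,∞) → ℝ^J be a C¹ solution of the linear transport system ∂_t ρ^{(j)} + ∂_a ρ^{(j)} = -b_j(a) ρ^{(j)} with boundary condition ρ(t,0) = ∫₀^∞ K(a) ρ(t,a) da, where K(a) is the lower bidiagonal matrix with entries K_{jj} = 2p_S^{(j)} b_j(a) and K_{j,j-1} = 2p_L^{(j-1)} b_{j-1}(a). Suppose (λ*, ρ̂, φ) is an eigentriple: ρ̂ solves the stationary primal problem with eigenvalue λ*, φ ∈ C¹_b solves the dual problem φ' - B(a)φ + K(a)ᵀφ(0) = λ*φ, and ⟨ρ̂,φ⟩ = 1. Then for h(t,a) = e^{-λ* t} ρ(t,a) - η ρ̂(a) with η = ⟨ρ(0,·), φ⟩, one has Σ_j ∫₀^∞ h^{(j)}(t,a) φ^{(j)}(a) da = 0 for all t ≥ 0. -/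
open MeasureTheory Real Set Finset

section Stmt18Aux

open intervalIntegral

private lemma aux_integral_Ioi_shift (f : ℝ → ℝ) (c : ℝ) :
    ∫ x in Set.Ioi c, f x = ∫ x in Set.Ioi (0:ℝ), f (x + c) := by
  have h : MeasurePreserving (fun x : ℝ => x + c) volume volume :=
    measurePreserving_add_right volume c
  have he : MeasurableEmbedding (fun x : ℝ => x + c) :=
    (MeasurableEquiv.addRight c).measurableEmbedding
  have hpre : (fun x : ℝ => x + c) ⁻¹' (Set.Ioi c) = Set.Ioi 0 := by
    ext x; simp [lt_add_iff_pos_left]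
  rw [← h.setIntegral_preimage_emb he f (Set.Ioi c), hpre]

private lemma aux_tri (A : ℝ → ℝ → ℝ) (hA : Continuous fun p : ℝ × ℝ => A p.1 p.2)
    {t : ℝ} (ht : 0 ≤ t) :
    ∫ s in (0:ℝ)..t, ∫ u in (0:ℝ)..s, A s u = ∫ u in (0:ℝ)..t, ∫ s in u..t, A s u := by
  set μ := volume.restrict (Set.Ioc (0:ℝ) t) with hμ
  haveI : IsFiniteMeasure μ := ⟨by
    rw [hμ, Measure.restrict_apply MeasurableSet.univ, Set.univ_inter]
    exact measure_Ioc_lt_top⟩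
  set B : ℝ × ℝ → ℝ := fun p => if p.2 ≤ p.1 then A p.1 p.2 else 0 with hB
  have hBmeas : StronglyMeasurable B := by
    apply StronglyMeasurable.ite ?_ hA.stronglyMeasurable stronglyMeasurable_const
    exact measurableSet_le measurable_snd measurable_fst
  obtain ⟨C, hC⟩ : ∃ C : ℝ, ∀ p ∈ Set.Icc (0:ℝ) t ×ˢ Set.Icc (0:ℝ) t, ‖A p.1 p.2‖ ≤ C := by
    rcases (isCompact_Icc.prod isCompact_Icc).exists_bound_of_continuousOn hA.continuousOn with ⟨C, hC⟩
    exact ⟨C, hC⟩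
  have hprod : μ.prod μ = (volume.prod volume).restrict
      ((Set.Ioc (0:ℝ) t) ×ˢ (Set.Ioc (0:ℝ) t)) := by
    rw [hμ, Measure.prod_restrict]
  have hBint : Integrable B (μ.prod μ) := by
    refine Integrable.mono' (g := fun _ => max C 0) (integrable_const _)
      hBmeas.aestronglyMeasurable ?_
    rw [hprod]
    filter_upwards [ae_restrict_mem ((measurableSet_Ioc.prod measurableSet_Ioc))] with p hp
    rcases hp with ⟨hp1, hp2⟩
    by_cases h : p.2 ≤ p.1
    · simp only [hB, if_pos h]
      exact le_max_of_le_left (hC p ⟨⟨hp1.1.le, hp1.2⟩, ⟨hp2.1.le, hp2.2⟩⟩)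
    · simp [hB, if_neg h, le_max_right]
  have hswap := MeasureTheory.integral_integral_swap (f := fun s u => B (s, u)) (μ := μ) (ν := μ)
    (by exact hBint)
  -- convert LHS
  have hL : ∫ s in (0:ℝ)..t, ∫ u in (0:ℝ)..s, A s u = ∫ s, (∫ u, B (s, u) ∂μ) ∂μ := by
    rw [intervalIntegral.integral_of_le ht, hμ]
    apply setIntegral_congr_fun measurableSet_Ioc
    intro s hs
    show ∫ u in (0:ℝ)..s, A s u = ∫ u in Set.Ioc (0:ℝ) t, B (s, u)
    have h1 : ∫ u, B (s, u) ∂(volume.restrict (Set.Ioc (0:ℝ) t))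
        = ∫ u in Set.Ioc (0:ℝ) t, (Set.Iic s).indicator (fun u => A s u) u := by
      apply setIntegral_congr_fun measurableSet_Ioc
      intro u _
      simp only [hB, Set.indicator_apply, Set.mem_Iic]
    rw [h1, MeasureTheory.integral_indicator measurableSet_Iic, Measure.restrict_restrict measurableSet_Iic]
    have h2 : Set.Iic s ∩ Set.Ioc (0:ℝ) t = Set.Ioc 0 s := by
      ext u; constructor
      · rintro ⟨hu1, hu2, _⟩; exact ⟨hu2, hu1⟩
      · rintro ⟨hu1, hu2⟩; exact ⟨hu2, hu1, hu2.trans hs.2⟩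
    rw [h2, intervalIntegral.integral_of_le hs.1.le]
  -- convert RHS
  have hR : ∫ u in (0:ℝ)..t, ∫ s in u..t, A s u = ∫ u, (∫ s, B (s, u) ∂μ) ∂μ := by
    rw [intervalIntegral.integral_of_le ht, hμ]
    apply setIntegral_congr_fun measurableSet_Ioc
    intro u hu
    show ∫ s in u..t, A s u = ∫ s in Set.Ioc (0:ℝ) t, B (s, u)
    have h1 : ∫ s, B (s, u) ∂(volume.restrict (Set.Ioc (0:ℝ) t))
        = ∫ s in Set.Ioc (0:ℝ) t, (Set.Ici u).indicator (fun s => A s u) s := by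
      apply setIntegral_congr_fun measurableSet_Ioc
      intro s _
      simp only [hB, Set.indicator_apply, Set.mem_Ici]
    rw [h1, MeasureTheory.integral_indicator measurableSet_Ici, Measure.restrict_restrict measurableSet_Ici]
    have h2 : Set.Ici u ∩ Set.Ioc (0:ℝ) t = Set.Icc u t := by
      ext s; constructor
      · rintro ⟨hs1, _, hs2⟩; exact ⟨hs1, hs2⟩
      · rintro ⟨hs1, hs2⟩; exact ⟨hs1, hu.1.trans_le hs1, hs2⟩
    rw [h2, integral_Icc_eq_integral_Ioc, intervalIntegral.integral_of_le hu.2]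
  rw [hL, hR]
  exact hswap

private lemma aux_star (m w v : ℝ → ℝ) (hm : Continuous m) (hv : Continuous v)
    (hwv : ∀ a : ℝ, 0 ≤ a → w a = w 0 + ∫ x in (0:ℝ)..a, v x)
    {t : ℝ} (ht : 0 ≤ t) :
    ∫ s in (0:ℝ)..t, m (t - s) * w s
      = ∫ s in (0:ℝ)..t, (m s * w 0 + ∫ u in (0:ℝ)..s, m (s - u) * v u) := by
  have hmc : ∀ c : ℝ, Continuous fun s => m (c - s) := fun c => hm.comp (by continuity)
  have hprim : Continuous fun s : ℝ => ∫ x in (0:ℝ)..s, v x :=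
    intervalIntegral.continuous_primitive (fun a b => hv.intervalIntegrable a b) 0
  have hconv : Continuous fun s : ℝ => ∫ u in (0:ℝ)..s, m (s - u) * v u := by
    apply intervalIntegral.continuous_parametric_intervalIntegral_of_continuous
      (f := fun s u => m (s - u) * v u) ?_ continuous_id
    exact (hm.comp (continuous_fst.sub continuous_snd)).mul (hv.comp continuous_snd)
  -- LHS
  have step1 : ∫ s in (0:ℝ)..t, m (t - s) * w s
      = ∫ s in (0:ℝ)..t, (m (t - s) * w 0 + m (t - s) * ∫ x in (0:ℝ)..s, v x) := by
    apply intervalIntegral.integral_congr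
    intro s hs
    rw [Set.uIcc_of_le ht] at hs
    show m (t - s) * w s = m (t - s) * w 0 + m (t - s) * ∫ x in (0:ℝ)..s, v x
    rw [hwv s hs.1]; ring
  have int1 : IntervalIntegrable (fun s => m (t - s) * w 0) volume 0 t :=
    ((hmc t).mul continuous_const).intervalIntegrable 0 t
  have int2 : IntervalIntegrable (fun s => m (t - s) * ∫ x in (0:ℝ)..s, v x) volume 0 t :=
    ((hmc t).mul hprim).intervalIntegrable 0 t
  have step2 : ∫ s in (0:ℝ)..t, (m (t - s) * w 0 + m (t - s) * ∫ x in (0:ℝ)..s, v x)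
      = (∫ s in (0:ℝ)..t, m (t - s) * w 0) + ∫ s in (0:ℝ)..t, m (t - s) * ∫ x in (0:ℝ)..s, v x :=
    intervalIntegral.integral_add int1 int2
  have hms : ∀ c : ℝ, (∫ s in (0:ℝ)..c, m (c - s)) = ∫ x in (0:ℝ)..c, m x := by
    intro c
    rw [intervalIntegral.integral_comp_sub_left m c, sub_self, sub_zero]
  have term1 : (∫ s in (0:ℝ)..t, m (t - s) * w 0) = (∫ x in (0:ℝ)..t, m x) * w 0 := by
    rw [intervalIntegral.integral_mul_const, hms t]
  have term2 : (∫ s in (0:ℝ)..t, m (t - s) * ∫ x in (0:ℝ)..s, v x)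
      = ∫ u in (0:ℝ)..t, (∫ x in (0:ℝ)..(t - u), m x) * v u := by
    have e1 : ∀ s : ℝ, m (t - s) * (∫ x in (0:ℝ)..s, v x) = ∫ u in (0:ℝ)..s, m (t - s) * v u := by
      intro s; rw [intervalIntegral.integral_const_mul]
    rw [intervalIntegral.integral_congr (g := fun s => ∫ u in (0:ℝ)..s, m (t - s) * v u)
      (fun s _ => e1 s)]
    rw [aux_tri (fun s u => m (t - s) * v u)
      ((hm.comp ((continuous_const.sub continuous_fst))).mul (hv.comp continuous_snd)) ht]
    apply intervalIntegral.integral_congr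
    intro u hu
    show (∫ s in u..t, m (t - s) * v u) = (∫ x in (0:ℝ)..(t - u), m x) * v u
    rw [intervalIntegral.integral_mul_const]
    congr 1
    rw [intervalIntegral.integral_comp_sub_left m t, sub_self]
  -- RHS
  have int3 : IntervalIntegrable (fun s => m s * w 0) volume 0 t :=
    (hm.mul continuous_const).intervalIntegrable 0 t
  have int4 : IntervalIntegrable (fun s => ∫ u in (0:ℝ)..s, m (s - u) * v u) volume 0 t :=
    hconv.intervalIntegrable 0 t
  have step3 : ∫ s in (0:ℝ)..t, (m s * w 0 + ∫ u in (0:ℝ)..s, m (s - u) * v u)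
      = (∫ s in (0:ℝ)..t, m s * w 0) + ∫ s in (0:ℝ)..t, ∫ u in (0:ℝ)..s, m (s - u) * v u :=
    intervalIntegral.integral_add int3 int4
  have term1' : (∫ s in (0:ℝ)..t, m s * w 0) = (∫ x in (0:ℝ)..t, m x) * w 0 :=
    intervalIntegral.integral_mul_const _ _
  have term2' : (∫ s in (0:ℝ)..t, ∫ u in (0:ℝ)..s, m (s - u) * v u)
      = ∫ u in (0:ℝ)..t, (∫ x in (0:ℝ)..(t - u), m x) * v u := by
    rw [aux_tri (fun s u => m (s - u) * v u)
      ((hm.comp (continuous_fst.sub continuous_snd)).mul (hv.comp continuous_snd)) ht]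
    apply intervalIntegral.integral_congr
    intro u hu
    show (∫ s in u..t, m (s - u) * v u) = (∫ x in (0:ℝ)..(t - u), m x) * v u
    rw [intervalIntegral.integral_mul_const]
    congr 1
    rw [intervalIntegral.integral_comp_sub_right m u, sub_self]
  rw [step1, step2, term1, term2, step3, term1', term2']

private lemma aux_swap (F : ℝ → ℝ → ℝ) (hF : Continuous fun p : ℝ × ℝ => F p.1 p.2)
    (g : ℝ → ℝ) (hg : IntegrableOn g (Set.Ioi (0:ℝ)))
    {t : ℝ} (hbound : ∀ x ∈ Set.Ioi (0:ℝ), ∀ s ∈ Set.Ioc (0:ℝ) t, ‖F x s‖ ≤ g x) :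
    ∫ x in Set.Ioi (0:ℝ), ∫ s in Set.Ioc (0:ℝ) t, F x s
      = ∫ s in Set.Ioc (0:ℝ) t, ∫ x in Set.Ioi (0:ℝ), F x s := by
  set μ := volume.restrict (Set.Ioi (0:ℝ)) with hμ
  set ν := volume.restrict (Set.Ioc (0:ℝ) t) with hν
  haveI : IsFiniteMeasure ν := ⟨by
    rw [hν, Measure.restrict_apply MeasurableSet.univ, Set.univ_inter]
    exact measure_Ioc_lt_top⟩
  have hFm : AEStronglyMeasurable (Function.uncurry F) (μ.prod ν) :=
    (hF.stronglyMeasurable (f := Function.uncurry F)).aestronglyMeasurable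
  have hint : Integrable (Function.uncurry F) (μ.prod ν) := by
    rw [MeasureTheory.integrable_prod_iff hFm]
    constructor
    · refine Filter.Eventually.of_forall fun x => ?_
      exact (hF.comp (continuous_const.prodMk continuous_id)).integrableOn_Ioc
    · have hmeas : AEStronglyMeasurable (fun x => ∫ s, ‖F x s‖ ∂ν) μ := by
        have : AEStronglyMeasurable (fun p : ℝ × ℝ => ‖F p.1 p.2‖) (μ.prod ν) :=
          hFm.norm
        exact this.integral_prod_right'
      refine Integrable.mono' (hg.mul_const (volume (Set.Ioc (0:ℝ) t)).toReal) hmeas ?_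
      rw [hμ]
      filter_upwards [ae_restrict_mem measurableSet_Ioi] with x hx
      have h1 : ∫ s, ‖F x s‖ ∂ν ≤ ∫ _ , g x ∂ν := by
        apply integral_mono_of_nonneg (Filter.Eventually.of_forall fun s => norm_nonneg _)
          (integrable_const _)
        rw [hν]
        filter_upwards [ae_restrict_mem measurableSet_Ioc] with s hs
        exact hbound x hx s hs
      have h2 : ∫ _, g x ∂ν = g x * (volume (Set.Ioc (0:ℝ) t)).toReal := by
        rw [MeasureTheory.integral_const, hν, Measure.real, Measure.restrict_apply MeasurableSet.univ, Set.univ_inter,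
          smul_eq_mul, mul_comm]
      rw [Real.norm_of_nonneg (integral_nonneg fun s => norm_nonneg _)]
      rw [← h2]; exact h1
  exact MeasureTheory.integral_integral_swap hint

end Stmt18Aux

/-- Conservation principle (general relative entropy, degree-zero invariant)
for the multilayer renewal PDE system: if `(λ*, ρ̂, φ)` is an eigentriple
(primal eigenfunction `ρ̂`, bounded dual eigenfunction `φ`, normalized by
`⟨ρ̂,φ⟩ = 1`) and `ρ` is a C¹ solution of the transport system with the
renewal boundary condition, then the dual-weighted mass of
`h(t,a) = e^{-λ*t} ρ(t,a) - η ρ̂(a)`, `η = ⟨ρ(0,·), φ⟩`, vanishes for all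
`t ≥ 0`. -/
theorem stmt_18 (n : ℕ) (b : Fin (n + 1) → ℝ → ℝ) (bmin bmax : Fin (n + 1) → ℝ)
    (hb : ∀ j, Continuous (b j)) (hmin : ∀ j, 0 < bmin j)
    (hbd : ∀ j, ∀ a : ℝ, 0 ≤ a → bmin j ≤ b j a ∧ b j a ≤ bmax j)
    (pS : Fin (n + 1) → ℝ)
    -- the solution ρ of the transport system
    (ρ : Fin (n + 1) → ℝ → ℝ → ℝ)
    (hρreg : ∀ j, Continuous (fun p : ℝ × ℝ => ρ j p.1 p.2))
    (hρL1 : ∀ j, ∀ t : ℝ, 0 ≤ t → MeasureTheory.IntegrableOn (ρ j t) (Set.Ioi (0:ℝ)))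
    (hρdom : ∀ j, ∀ T : ℝ, 0 < T → ∃ g : ℝ → ℝ,
      MeasureTheory.IntegrableOn g (Set.Ioi (0:ℝ)) ∧
      ∀ t ∈ Set.Icc (0:ℝ) T, ∀ a ∈ Set.Ioi (0:ℝ), |ρ j t a| ≤ g a)
    -- transport equation: the directional derivative along (1,1) equals -b ρ
    (hρpde : ∀ j, ∀ t : ℝ, 0 ≤ t → ∀ a : ℝ, 0 ≤ a →
      HasDerivAt (fun s => ρ j (t + s) (a + s)) (-(b j a) * ρ j t a) 0)
    -- renewal boundary condition ρ(t,0) = ∫₀^∞ K(a) ρ(t,a) da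
    (hρbd0 : ∀ t : ℝ, 0 ≤ t → ρ 0 t 0 =
      ∫ a in Set.Ioi (0:ℝ), 2 * pS 0 * b 0 a * ρ 0 t a)
    (hρbd : ∀ t : ℝ, 0 ≤ t → ∀ j : Fin n, ρ j.succ t 0 =
      ∫ a in Set.Ioi (0:ℝ),
        (2 * pS j.succ * b j.succ a * ρ j.succ t a +
          2 * (1 - pS j.castSucc) * b j.castSucc a * ρ j.castSucc t a))
    -- the eigentriple (λ*, ρ̂, φ)
    (lam : ℝ) (ρhat φ : Fin (n + 1) → ℝ → ℝ)
    (hρhatreg : ∀ j, Continuous (ρhat j))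
    (hρhatL1 : ∀ j, MeasureTheory.IntegrableOn (ρhat j) (Set.Ioi (0:ℝ)))
    (hρhatode : ∀ j, ∀ a : ℝ, 0 ≤ a →
      HasDerivAt (ρhat j) (-(lam + b j a) * ρhat j a) a)
    (hρhatbd0 : ρhat 0 0 = ∫ a in Set.Ioi (0:ℝ), 2 * pS 0 * b 0 a * ρhat 0 a)
    (hρhatbd : ∀ j : Fin n, ρhat j.succ 0 =
      ∫ a in Set.Ioi (0:ℝ),
        (2 * pS j.succ * b j.succ a * ρhat j.succ a +
          2 * (1 - pS j.castSucc) * b j.castSucc a * ρhat j.castSucc a))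
    (hφreg : ∀ j, Continuous (φ j))
    (hφbdd : ∀ j, ∃ C : ℝ, ∀ a : ℝ, 0 ≤ a → |φ j a| ≤ C)
    -- dual equation φ' - Bφ + Kᵀφ(0) = λ*φ
    (hφode : ∀ j : Fin (n + 1), ∀ a : ℝ, 0 ≤ a →
      HasDerivAt (φ j)
        (lam * φ j a + b j a * φ j a - 2 * pS j * b j a * φ j 0 -
          (if h : (j : ℕ) < n then 2 * (1 - pS j) * b j a * φ (j + 1) 0 else 0)) a)
    -- normalization ⟨ρ̂, φ⟩ = 1
    (hnorm : ∑ j, ∫ a in Set.Ioi (0:ℝ), ρhat j a * φ j a = 1)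
    (η : ℝ) (hη : η = ∑ j, ∫ a in Set.Ioi (0:ℝ), ρ j 0 a * φ j a) :
    ∀ t : ℝ, 0 ≤ t →
      ∑ j, ∫ a in Set.Ioi (0:ℝ),
        (Real.exp (-(lam * t)) * ρ j t a - η * ρhat j a) * φ j a = 0 := by
  choose Cφ hCφ using hφbdd
  have hCφ0 : ∀ j, 0 ≤ Cφ j := fun j => (abs_nonneg _).trans (hCφ j 0 le_rfl)
  set E : Fin (n + 1) → ℝ → ℝ := fun j a => Real.exp (-∫ x in (0:ℝ)..a, b j x) with hE
  have hEpos : ∀ j a, 0 < E j a := fun j a => Real.exp_pos _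
  have hEcont : ∀ j, Continuous (E j) := fun j =>
    ((intervalIntegral.continuous_primitive (fun a b' => (hb j).intervalIntegrable a b') 0).neg).rexp
  have hE0 : ∀ j, E j 0 = 1 := by
    intro j; simp [hE]
  have hEderiv : ∀ j a, HasDerivAt (E j) (-(b j a) * E j a) a := by
    intro j a
    have h1 : HasDerivAt (fun a => ∫ x in (0:ℝ)..a, b j x) (b j a) a :=
      ((hb j).integral_hasStrictDerivAt 0 a).hasDerivAt
    have h2 := (h1.neg).exp
    refine h2.congr_deriv ?_
    exact mul_comm _ _
  have hbnn : ∀ j (a : ℝ), 0 ≤ a → 0 ≤ b j a := fun j a ha =>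
    (hmin j).le.trans (hbd j a ha).1
  have hEratio : ∀ j (x s : ℝ), 0 ≤ x → 0 ≤ s → E j (x + s) ≤ E j x := by
    intro j x s hx hs
    apply Real.exp_le_exp.2
    simp only [neg_le_neg_iff]
    rw [← intervalIntegral.integral_add_adjacent_intervals (b := x)
      ((hb j).intervalIntegrable 0 x) ((hb j).intervalIntegrable x (x+s))]
    nlinarith [intervalIntegral.integral_nonneg (μ := volume) (f := b j)
      (by linarith : x ≤ x + s)
      (fun u hu => hbnn j u (by exact le_trans hx hu.1))]
  set m : Fin (n + 1) → ℝ → ℝ := fun j s => ρ j s 0 with hm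
  have hmcont : ∀ j, Continuous (m j) := fun j =>
    (hρreg j).comp (continuous_id.prodMk continuous_const)
  -- characteristics
  have char : ∀ j (t a s : ℝ), 0 ≤ t → 0 ≤ a → 0 ≤ s →
      ρ j (t + s) (a + s) * E j a = ρ j t a * E j (a + s) := by
    intro j t a s htt haa hss
    set z : ℝ → ℝ := fun u => ρ j (t + u) (a + u) / E j (a + u) with hz
    have hzd : ∀ σ ∈ Set.uIcc 0 s, HasDerivAt z 0 σ := by
      intro σ hσ
      rw [Set.uIcc_of_le hss] at hσ
      have hρ0 := hρpde j (t + σ) (by linarith [hσ.1]) (a + σ) (by linarith [hσ.1])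
      have hsub : HasDerivAt (fun u : ℝ => u - σ) 1 σ := by
        simpa using (hasDerivAt_id σ).sub_const σ
      have hρ0' : HasDerivAt (fun s' => ρ j (t + σ + s') (a + σ + s'))
          (-(b j (a + σ)) * ρ j (t + σ) (a + σ)) (σ - σ) := by
        rw [sub_self]; exact hρ0
      have hcomp := HasDerivAt.comp (h₂ := fun s' => ρ j (t + σ + s') (a + σ + s'))
        (h := fun u => u - σ) σ hρ0' hsub
      have heq : ((fun s' => ρ j (t + σ + s') (a + σ + s')) ∘ fun u => u - σ)
          = fun u => ρ j (t + u) (a + u) := by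
        funext u
        simp only [Function.comp]
        congr 1 <;> ring
      rw [heq, mul_one] at hcomp
      have hρ2 : HasDerivAt (fun u => ρ j (t + u) (a + u))
          (-(b j (a + σ)) * ρ j (t + σ) (a + σ)) σ := by
        simpa [neg_mul] using hcomp
      have hE2 : HasDerivAt (fun u => E j (a + u)) (-(b j (a + σ)) * E j (a + σ)) σ := by
        have h3 : HasDerivAt (fun u : ℝ => a + u) 1 σ := by
          simpa using (hasDerivAt_id σ).const_add a
        have := HasDerivAt.comp (h₂ := E j) σ (hEderiv j (a + σ)) h3
        rw [mul_one] at this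
        exact this
      have hdiv := hρ2.div hE2 (hEpos j (a + σ)).ne'
      have hzero : ((-(b j (a + σ)) * ρ j (t + σ) (a + σ)) * E j (a + σ)
          - ρ j (t + σ) (a + σ) * (-(b j (a + σ)) * E j (a + σ))) / (E j (a + σ)) ^ 2 = 0 := by
        ring
      rw [hzero] at hdiv
      exact hdiv
    have hconst : z s = z 0 := by
      have := intervalIntegral.integral_eq_sub_of_hasDerivAt hzd
        (intervalIntegrable_const (c := (0:ℝ)))
      simp only [intervalIntegral.integral_zero] at this
      linarith [this]
    have h0 : z 0 = ρ j t a / E j a := by simp [hz]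
    have hs' : z s = ρ j (t + s) (a + s) / E j (a + s) := rfl
    rw [hs', h0] at hconst
    rw [div_eq_div_iff (hEpos j (a + s)).ne' (hEpos j a).ne'] at hconst
    linarith [hconst]
  have rep1 : ∀ j (t a : ℝ), 0 ≤ a → a ≤ t → ρ j t a = m j (t - a) * E j a := by
    intro j t a ha hat
    have := char j (t - a) 0 a (by linarith) le_rfl ha
    simp only [hE0 j, mul_one, zero_add, sub_add_cancel] at this
    rw [this, hm]
  have rep2 : ∀ j (t x : ℝ), 0 ≤ t → 0 ≤ x →
      ρ j t (x + t) * E j x = ρ j 0 x * E j (x + t) := by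
    intro j t x ht hx
    have := char j 0 x t le_rfl hx ht
    simpa using this
  set r : Fin (n + 1) → ℝ → ℝ := fun j x => ρ j 0 x / E j x with hr
  have hrcont : ∀ j, Continuous (r j) := by
    intro j
    exact ((hρreg j).comp (continuous_const.prodMk continuous_id)).div (hEcont j)
      (fun x => (hEpos j x).ne')
  -- general integrability
  have hIψ : ∀ j (t : ℝ), 0 ≤ t → ∀ (ψ : ℝ → ℝ) (Cψ : ℝ), Continuous ψ →
      (∀ a : ℝ, 0 ≤ a → |ψ a| ≤ Cψ) →
      IntegrableOn (fun a => ρ j t a * ψ a) (Set.Ioi (0:ℝ)) := by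
    intro j t ht ψ Cψ hψc hψb
    refine Integrable.mono' (((hρL1 j t ht).norm).mul_const Cψ) ?_ ?_
    · exact (((hρreg j).comp (continuous_const.prodMk continuous_id)).mul
        hψc).aestronglyMeasurable.restrict
    · filter_upwards [ae_restrict_mem measurableSet_Ioi] with x hx
      have hx0 : (0:ℝ) ≤ x := le_of_lt hx
      have := hψb x hx0
      have h1 : ‖ρ j t x * ψ x‖ = |ρ j t x| * |ψ x| := abs_mul _ _
      rw [h1]
      have : |ρ j t x| * |ψ x| ≤ |ρ j t x| * Cψ := by
        apply mul_le_mul_of_nonneg_left (hψb x hx0) (abs_nonneg _)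
      simpa [Real.norm_eq_abs] using this
  -- tail integrand integrability
  have hIr : ∀ j (t : ℝ), 0 ≤ t → ∀ (ψ : ℝ → ℝ) (Cψ : ℝ), Continuous ψ →
      (∀ a : ℝ, 0 ≤ a → |ψ a| ≤ Cψ) →
      IntegrableOn (fun x => r j x * (E j (x + t) * ψ (x + t))) (Set.Ioi (0:ℝ)) := by
    intro j t ht ψ Cψ hψc hψb
    refine Integrable.mono' (((hρL1 j 0 le_rfl).norm).mul_const Cψ) ?_ ?_
    · apply Continuous.aestronglyMeasurable ?_ |>.restrict
      exact (hrcont j).mul ((hEcont j |>.comp (continuous_id.add continuous_const)).mul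
        (hψc.comp (continuous_id.add continuous_const)))
    · filter_upwards [ae_restrict_mem measurableSet_Ioi] with x hx
      have hx0 : (0:ℝ) ≤ x := le_of_lt hx
      have hEr : E j (x + t) ≤ E j x := hEratio j x t hx0 ht
      have hxt : (0:ℝ) ≤ x + t := by linarith
      rw [Real.norm_eq_abs, hr]
      have h1 : |ρ j 0 x / E j x * (E j (x + t) * ψ (x + t))|
          = |ρ j 0 x| * ((E j (x + t) / E j x) * |ψ (x + t)|) := by
        rw [abs_mul, abs_div, abs_mul, abs_of_pos (hEpos j x), abs_of_pos (hEpos j (x + t))]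
        ring
      rw [h1]
      have hratio : E j (x + t) / E j x ≤ 1 := by
        rw [div_le_one (hEpos j x)]; exact hEr
      have hratio0 : 0 ≤ E j (x + t) / E j x := le_of_lt (div_pos (hEpos j (x+t)) (hEpos j x))
      calc |ρ j 0 x| * ((E j (x + t) / E j x) * |ψ (x + t)|)
          ≤ |ρ j 0 x| * (1 * Cψ) := by
            apply mul_le_mul_of_nonneg_left ?_ (abs_nonneg _)
            apply mul_le_mul hratio (hψb _ hxt) (abs_nonneg _) zero_le_one
        _ = ‖ρ j 0 x‖ * Cψ := by rw [Real.norm_eq_abs]; ring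
  -- the splitting identity
  have split : ∀ j (ψ : ℝ → ℝ) (Cψ : ℝ), Continuous ψ →
      (∀ a : ℝ, 0 ≤ a → |ψ a| ≤ Cψ) → ∀ t : ℝ, 0 ≤ t →
      ∫ a in Set.Ioi (0:ℝ), ρ j t a * ψ a
        = (∫ s in (0:ℝ)..t, m j (t - s) * (E j s * ψ s))
          + ∫ x in Set.Ioi (0:ℝ), r j x * (E j (x + t) * ψ (x + t)) := by
    intro j ψ Cψ hψc hψb t ht
    have hint : IntegrableOn (fun a => ρ j t a * ψ a) (Set.Ioi (0:ℝ)) :=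
      hIψ j t ht ψ Cψ hψc hψb
    have hunion : Set.Ioc (0:ℝ) t ∪ Set.Ioi t = Set.Ioi 0 := Set.Ioc_union_Ioi_eq_Ioi ht
    have hdisj : Disjoint (Set.Ioc (0:ℝ) t) (Set.Ioi t) := Set.Ioc_disjoint_Ioi le_rfl
    have hsplit0 : ∫ a in Set.Ioi (0:ℝ), ρ j t a * ψ a
        = (∫ a in Set.Ioc (0:ℝ) t, ρ j t a * ψ a) + ∫ a in Set.Ioi t, ρ j t a * ψ a := by
      rw [← hunion]
      exact setIntegral_union hdisj measurableSet_Ioi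
        (hint.mono_set (by rw [← hunion]; exact Set.subset_union_left))
        (hint.mono_set (by rw [← hunion]; exact Set.subset_union_right))
    have hpiece1 : ∫ a in Set.Ioc (0:ℝ) t, ρ j t a * ψ a
        = ∫ s in (0:ℝ)..t, m j (t - s) * (E j s * ψ s) := by
      rw [intervalIntegral.integral_of_le ht]
      apply setIntegral_congr_fun measurableSet_Ioc
      intro a ha
      show ρ j t a * ψ a = m j (t - a) * (E j a * ψ a)
      rw [rep1 j t a (le_of_lt ha.1) ha.2]; ring
    have hpiece2 : ∫ a in Set.Ioi t, ρ j t a * ψ a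
        = ∫ x in Set.Ioi (0:ℝ), r j x * (E j (x + t) * ψ (x + t)) := by
      rw [aux_integral_Ioi_shift (fun a => ρ j t a * ψ a) t]
      apply setIntegral_congr_fun measurableSet_Ioi
      intro x hx
      show ρ j t (x + t) * ψ (x + t) = r j x * (E j (x + t) * ψ (x + t))
      have h2 := rep2 j t x ht (le_of_lt hx)
      have hEx := (hEpos j x).ne'
      rw [hr]
      field_simp
      linear_combination ψ (x + t) * h2
    rw [hsplit0, hpiece1, hpiece2]
  -- dual along characteristics
  set w : Fin (n + 1) → ℝ → ℝ := fun j a => E j a * φ j a with hw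
  set D : Fin (n + 1) → ℝ := fun j => 2 * pS j * φ j 0
      + (if (j : ℕ) < n then 2 * (1 - pS j) * φ (j + 1) 0 else 0) with hD
  set vw : Fin (n + 1) → ℝ → ℝ := fun j a => lam * w j a - D j * (b j a * E j a) with hvw
  have hwcont : ∀ j, Continuous (w j) := fun j => (hEcont j).mul (hφreg j)
  have hvwcont : ∀ j, Continuous (vw j) := fun j =>
    ((continuous_const.mul (hwcont j)).sub (continuous_const.mul ((hb j).mul (hEcont j))))
  have hw0 : ∀ j, w j 0 = φ j 0 := by intro j; simp [hw, hE0 j]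
  have hwderiv : ∀ j (a : ℝ), 0 ≤ a → HasDerivAt (w j) (vw j a) a := by
    intro j a ha
    have := (hEderiv j a).mul (hφode j a ha)
    refine this.congr_deriv ?_
    simp only [hvw, hw, hD]
    by_cases hcase : (j : ℕ) < n
    · rw [dif_pos hcase, if_pos hcase]; ring
    · rw [dif_neg hcase, if_neg hcase]; ring
  have hwFTC2 : ∀ j (x s : ℝ), 0 ≤ x → 0 ≤ s →
      w j (x + s) - w j x = ∫ u in (0:ℝ)..s, vw j (x + u) := by
    intro j x s hx hs
    have h1 : ∫ y in x..(x + s), vw j y = w j (x + s) - w j x := by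
      apply intervalIntegral.integral_eq_sub_of_hasDerivAt
      · intro y hy
        rw [Set.uIcc_of_le (by linarith)] at hy
        exact hwderiv j y (le_trans hx hy.1)
      · exact (hvwcont j).intervalIntegrable _ _
    have h2 : ∫ u in (0:ℝ)..s, vw j (u + x) = ∫ y in (0+x)..(s+x), vw j y :=
      intervalIntegral.integral_comp_add_right (fun y => vw j y) x
    have h3 : ∫ u in (0:ℝ)..s, vw j (x + u) = ∫ u in (0:ℝ)..s, vw j (u + x) := by
      apply intervalIntegral.integral_congr
      intro u hu
      simp [add_comm]
    rw [h3, h2, zero_add, show s + x = x + s by ring, h1]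
  have hwFTC : ∀ j (a : ℝ), 0 ≤ a → w j a = w j 0 + ∫ u in (0:ℝ)..a, vw j u := by
    intro j a ha
    have := hwFTC2 j 0 a le_rfl ha
    simp only [zero_add] at this
    linarith [this]
  -- main functionals
  set H : Fin (n + 1) → ℝ → ℝ :=
    fun j t => ∫ s in (0:ℝ)..t, m j (t - s) * (E j s * φ j s) with hHdef
  set P : Fin (n + 1) → ℝ → ℝ :=
    fun j t => ∫ x in Set.Ioi (0:ℝ), r j x * (E j (x + t) * φ j (x + t)) with hPdef
  set Ile : Fin (n + 1) → ℝ → ℝ :=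
    fun j t => ∫ s in (0:ℝ)..t, m j (t - s) * (E j s * b j s) with hIledef
  set Igt : Fin (n + 1) → ℝ → ℝ :=
    fun j t => ∫ x in Set.Ioi (0:ℝ), r j x * (E j (x + t) * b j (x + t)) with hIgtdef
  have hbmax : ∀ j (a : ℝ), 0 ≤ a → |b j a| ≤ bmax j := by
    intro j a ha
    rw [abs_of_nonneg (hbnn j a ha)]
    exact (hbd j a ha).2
  -- equation for H
  have eqH : ∀ j (t : ℝ), 0 ≤ t → H j t
      = ∫ s in (0:ℝ)..t, (m j s * φ j 0 + (lam * H j s - D j * Ile j s)) := by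
    intro j t ht
    have hwv : ∀ a : ℝ, 0 ≤ a → E j a * φ j a = E j 0 * φ j 0 + ∫ x in (0:ℝ)..a, vw j x := by
      intro a ha
      have := hwFTC j a ha
      simpa [hw] using this
    have hstar := aux_star (m j) (fun a => E j a * φ j a) (vw j) (hmcont j) (hvwcont j)
      hwv ht
    rw [hHdef]
    simp only
    rw [hstar]
    apply intervalIntegral.integral_congr
    intro s hs
    rw [Set.uIcc_of_le ht] at hs
    show m j s * (E j 0 * φ j 0) + (∫ u in (0:ℝ)..s, m j (s - u) * vw j u)
        = m j s * φ j 0 + (lam * H j s - D j * Ile j s)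
    have hlin : ∫ u in (0:ℝ)..s, m j (s - u) * vw j u
        = lam * H j s - D j * Ile j s := by
      have h1 : ∀ u : ℝ, m j (s - u) * vw j u
          = lam * (m j (s - u) * (E j u * φ j u)) - D j * (m j (s - u) * (E j u * b j u)) := by
        intro u; simp only [hvw, hw]; ring
      rw [intervalIntegral.integral_congr
        (g := fun u => lam * (m j (s - u) * (E j u * φ j u))
          - D j * (m j (s - u) * (E j u * b j u))) (fun u _ => h1 u)]
      have hc1 : Continuous fun u => m j (s - u) * (E j u * φ j u) :=
        ((hmcont j).comp (continuous_const.sub continuous_id)).mul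
          ((hEcont j).mul (hφreg j))
      have hc2 : Continuous fun u => m j (s - u) * (E j u * b j u) :=
        ((hmcont j).comp (continuous_const.sub continuous_id)).mul
          ((hEcont j).mul (hb j))
      rw [intervalIntegral.integral_sub (f := fun u => lam * (m j (s - u) * (E j u * φ j u)))
        (g := fun u => D j * (m j (s - u) * (E j u * b j u)))
        ((continuous_const.mul hc1).intervalIntegrable _ _)
        ((continuous_const.mul hc2).intervalIntegrable _ _),
        intervalIntegral.integral_const_mul, intervalIntegral.integral_const_mul]
    rw [hlin, hE0 j, one_mul]
  have hbmax0 : ∀ j, 0 ≤ bmax j := fun j =>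
    le_trans (hbnn j 0 le_rfl) (hbd j 0 le_rfl).2
  have hvwbound : ∀ j (x s : ℝ), 0 < x → 0 ≤ s →
      ‖r j x * vw j (x + s)‖ ≤ (|lam| * Cφ j + |D j| * bmax j) * ‖ρ j 0 x‖ := by
    intro j x s hx hs
    have hx0 : (0:ℝ) ≤ x := hx.le
    have hxs : (0:ℝ) ≤ x + s := by linarith
    have hEr : E j (x + s) ≤ E j x := hEratio j x s hx0 hs
    have hEx := hEpos j x
    have hExs := hEpos j (x + s)
    rw [Real.norm_eq_abs, Real.norm_eq_abs]
    have h1 : |r j x * vw j (x + s)| = |ρ j 0 x| / E j x * |vw j (x + s)| := by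
      rw [hr]; simp only
      rw [abs_mul, abs_div, abs_of_pos hEx]
    rw [h1]
    have t1 : |lam * (E j (x + s) * φ j (x + s))| ≤ |lam| * Cφ j * E j x := by
      rw [abs_mul, abs_mul, abs_of_pos hExs]
      calc |lam| * (E j (x + s) * |φ j (x + s)|)
          ≤ |lam| * (E j x * Cφ j) := by
            apply mul_le_mul_of_nonneg_left ?_ (abs_nonneg lam)
            exact mul_le_mul hEr (hCφ j _ hxs) (abs_nonneg _) (le_of_lt hEx)
        _ = |lam| * Cφ j * E j x := by ring
    have t2 : |D j * (b j (x + s) * E j (x + s))| ≤ |D j| * bmax j * E j x := by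
      rw [abs_mul, abs_mul, abs_of_pos hExs]
      calc |D j| * (|b j (x + s)| * E j (x + s))
          ≤ |D j| * (bmax j * E j x) := by
            apply mul_le_mul_of_nonneg_left ?_ (abs_nonneg _)
            exact mul_le_mul (hbmax j _ hxs) hEr (le_of_lt hExs) (hbmax0 j)
        _ = |D j| * bmax j * E j x := by ring
    have htri : |vw j (x + s)| ≤ |lam * (E j (x + s) * φ j (x + s))|
        + |D j * (b j (x + s) * E j (x + s))| := by
      simp only [hvw, hw]
      exact abs_sub _ _
    have h2 : |vw j (x + s)| ≤ (|lam| * Cφ j + |D j| * bmax j) * E j x := by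
      calc |vw j (x + s)| ≤ _ + _ := htri
        _ ≤ |lam| * Cφ j * E j x + |D j| * bmax j * E j x := add_le_add t1 t2
        _ = (|lam| * Cφ j + |D j| * bmax j) * E j x := by ring
    calc |ρ j 0 x| / E j x * |vw j (x + s)|
        ≤ |ρ j 0 x| / E j x * ((|lam| * Cφ j + |D j| * bmax j) * E j x) := by
          apply mul_le_mul_of_nonneg_left h2 (div_nonneg (abs_nonneg _) (le_of_lt hEx))
      _ = (|lam| * Cφ j + |D j| * bmax j) * |ρ j 0 x| := by field_simp
  -- equation for P
  have eqP : ∀ j (t : ℝ), 0 ≤ t → P j t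
      = P j 0 + ∫ s in (0:ℝ)..t, (lam * P j s - D j * Igt j s) := by
    intro j t ht
    have hintt := hIr j t ht (φ j) (Cφ j) (hφreg j) (hCφ j)
    have hint0 := hIr j 0 le_rfl (φ j) (Cφ j) (hφreg j) (hCφ j)
    have hdiff : P j t - P j 0
        = ∫ x in Set.Ioi (0:ℝ), (r j x * (E j (x + t) * φ j (x + t))
            - r j x * (E j (x + 0) * φ j (x + 0))) := by
      simp only [hPdef]
      exact (integral_sub hintt hint0).symm
    have hcongr : ∀ x ∈ Set.Ioi (0:ℝ),
        r j x * (E j (x + t) * φ j (x + t)) - r j x * (E j (x + 0) * φ j (x + 0))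
        = ∫ s in Set.Ioc (0:ℝ) t, r j x * vw j (x + s) := by
      intro x hx
      have hx0 : (0:ℝ) ≤ x := le_of_lt hx
      have h1 := hwFTC2 j x t hx0 ht
      have h2 : r j x * (E j (x + t) * φ j (x + t)) - r j x * (E j (x + 0) * φ j (x + 0))
          = r j x * (w j (x + t) - w j x) := by
        simp only [hw, add_zero]; ring
      rw [h2, h1, ← intervalIntegral.integral_const_mul, intervalIntegral.integral_of_le ht]
    have hdiff2 : P j t - P j 0
        = ∫ x in Set.Ioi (0:ℝ), ∫ s in Set.Ioc (0:ℝ) t, r j x * vw j (x + s) := by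
      rw [hdiff]
      exact setIntegral_congr_fun measurableSet_Ioi (fun x hx => hcongr x hx)
    have hFc : Continuous fun p : ℝ × ℝ => r j p.1 * vw j (p.1 + p.2) :=
      ((hrcont j).comp continuous_fst).mul
        ((hvwcont j).comp (continuous_fst.add continuous_snd))
    have hgint : IntegrableOn (fun x => (|lam| * Cφ j + |D j| * bmax j) * ‖ρ j 0 x‖)
        (Set.Ioi (0:ℝ)) := ((hρL1 j 0 le_rfl).norm).const_mul _
    have hswap := aux_swap (fun x s => r j x * vw j (x + s)) hFc
      (fun x => (|lam| * Cφ j + |D j| * bmax j) * ‖ρ j 0 x‖) hgint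
      (t := t) (fun x hx s hs => hvwbound j x s hx (le_of_lt hs.1))
    have hinner : ∀ s ∈ Set.Ioc (0:ℝ) t, (∫ x in Set.Ioi (0:ℝ), r j x * vw j (x + s))
        = lam * P j s - D j * Igt j s := by
      intro s hs
      have hs0 : (0:ℝ) ≤ s := le_of_lt hs.1
      have h1 : ∀ x : ℝ, r j x * vw j (x + s)
          = lam * (r j x * (E j (x + s) * φ j (x + s)))
            - D j * (r j x * (E j (x + s) * b j (x + s))) := by
        intro x; simp only [hvw, hw]; ring
      rw [setIntegral_congr_fun measurableSet_Ioi (fun x _ => h1 x)]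
      rw [integral_sub ((hIr j s hs0 (φ j) (Cφ j) (hφreg j) (hCφ j)).const_mul lam)
        ((hIr j s hs0 (b j) (bmax j) (hb j) (hbmax j)).const_mul (D j)),
        MeasureTheory.integral_const_mul, MeasureTheory.integral_const_mul]
    have hfin : P j t - P j 0 = ∫ s in Set.Ioc (0:ℝ) t, (lam * P j s - D j * Igt j s) := by
      rw [hdiff2, hswap]
      exact setIntegral_congr_fun measurableSet_Ioc hinner
    rw [← intervalIntegral.integral_of_le ht] at hfin
    linarith [hfin]
  -- boundary cancellation
  have cancel : ∀ s : ℝ, 0 ≤ s →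
      ∑ j, m j s * φ j 0 = ∑ j, D j * (Ile j s + Igt j s) := by
    intro s hs
    set Jf : Fin (n + 1) → ℝ := fun j => ∫ a in Set.Ioi (0:ℝ), ρ j s a * b j a with hJf
    have hJ : ∀ j, Ile j s + Igt j s = Jf j := by
      intro j
      simp only [hJf, hIledef, hIgtdef]
      exact (split j (b j) (bmax j) (hb j) (hbmax j) s hs).symm
    have base : ∀ (k : Fin (n + 1)) (c : ℝ),
        IntegrableOn (fun a => c * b k a * ρ k s a) (Set.Ioi (0:ℝ)) := by
      intro k c
      apply ((hIψ k s hs (b k) (bmax k) (hb k) (hbmax k)).const_mul c).congr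
      exact Filter.Eventually.of_forall fun a => by ring
    have hint : ∀ (k : Fin (n + 1)) (c : ℝ),
        (∫ a in Set.Ioi (0:ℝ), c * b k a * ρ k s a) = c * Jf k := by
      intro k c
      rw [MeasureTheory.integral_congr_ae
        (g := fun a => c * (ρ k s a * b k a)) (Filter.Eventually.of_forall fun a => by ring),
        MeasureTheory.integral_const_mul]
    have hm0' : m 0 s = 2 * pS 0 * Jf 0 := by
      show ρ 0 s 0 = _
      rw [hρbd0 s hs]
      exact hint 0 (2 * pS 0)
    have hmsucc' : ∀ i : Fin n,
        m i.succ s = 2 * pS i.succ * Jf i.succ + 2 * (1 - pS i.castSucc) * Jf i.castSucc := by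
      intro i
      show ρ i.succ s 0 = _
      rw [hρbd s hs i, MeasureTheory.integral_add (base i.succ _) (base i.castSucc _),
        hint i.succ _, hint i.castSucc _]
    calc ∑ j, m j s * φ j 0
        = 2 * pS 0 * Jf 0 * φ 0 0
          + ∑ i : Fin n, (2 * pS i.succ * Jf i.succ * φ i.succ 0
            + 2 * (1 - pS i.castSucc) * Jf i.castSucc * φ i.succ 0) := by
          rw [Fin.sum_univ_succ (f := fun j => m j s * φ j 0), hm0']
          congr 1
          apply Finset.sum_congr rfl
          intro i _
          rw [hmsucc' i]; ring
      _ = (2 * pS 0 * φ 0 0) * Jf 0 + ((∑ i : Fin n, (2 * pS i.succ * φ i.succ 0) * Jf i.succ)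
          + ∑ i : Fin n, (2 * (1 - pS i.castSucc) * φ i.succ 0) * Jf i.castSucc) := by
          rw [Finset.sum_add_distrib]
          have e1 : ∀ i : Fin n, 2 * pS i.succ * Jf i.succ * φ i.succ 0
            = (2 * pS i.succ * φ i.succ 0) * Jf i.succ := fun i => by ring
          have e2 : ∀ i : Fin n, 2 * (1 - pS i.castSucc) * Jf i.castSucc * φ i.succ 0
            = (2 * (1 - pS i.castSucc) * φ i.succ 0) * Jf i.castSucc := fun i => by ring
          rw [Finset.sum_congr rfl (fun i _ => e1 i), Finset.sum_congr rfl (fun i _ => e2 i)]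
          ring
      _ = (∑ j, (2 * pS j * φ j 0) * Jf j)
          + ∑ i : Fin n, (2 * (1 - pS i.castSucc) * φ i.succ 0) * Jf i.castSucc := by
          rw [Fin.sum_univ_succ (f := fun j => (2 * pS j * φ j 0) * Jf j)]
          ring
      _ = ∑ j, D j * Jf j := by
          have h1 : ∀ j : Fin (n + 1), D j * Jf j = (2 * pS j * φ j 0) * Jf j
              + (if (j : ℕ) < n then 2 * (1 - pS j) * φ (j + 1) 0 else 0) * Jf j := by
            intro j; simp only [hD]; ring
          rw [Finset.sum_congr rfl (fun j _ => h1 j), Finset.sum_add_distrib]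
          congr 1
          rw [Fin.sum_univ_castSucc
            (f := fun j => (if (j : ℕ) < n then 2 * (1 - pS j) * φ (j + 1) 0 else 0) * Jf j)]
          have hlast : (if ((Fin.last n : Fin (n + 1)) : ℕ) < n then
              2 * (1 - pS (Fin.last n)) * φ (Fin.last n + 1) 0 else 0) * Jf (Fin.last n) = 0 := by
            rw [if_neg (by simp)]
            ring
          rw [hlast, add_zero]
          apply Finset.sum_congr rfl
          intro i _
          rw [if_pos (by simpa using i.isLt), Fin.coeSucc_eq_succ]
      _ = ∑ j, D j * (Ile j s + Igt j s) := by
          apply Finset.sum_congr rfl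
          intro j _
          rw [hJ j]
  -- continuity of the functionals
  have hHcont : ∀ j, Continuous (H j) := by
    intro j
    simp only [hHdef]
    apply intervalIntegral.continuous_parametric_intervalIntegral_of_continuous
      (f := fun t s => m j (t - s) * (E j s * φ j s)) ?_ continuous_id
    exact ((hmcont j).comp (continuous_fst.sub continuous_snd)).mul
      (((hEcont j).comp continuous_snd).mul ((hφreg j).comp continuous_snd))
  have hIlecont : ∀ j, Continuous (Ile j) := by
    intro j
    simp only [hIledef]
    apply intervalIntegral.continuous_parametric_intervalIntegral_of_continuous
      (f := fun t s => m j (t - s) * (E j s * b j s)) ?_ continuous_id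
    exact ((hmcont j).comp (continuous_fst.sub continuous_snd)).mul
      (((hEcont j).comp continuous_snd).mul ((hb j).comp continuous_snd))
  have hrb : ∀ j (ψ : ℝ → ℝ) (Cψ : ℝ), (∀ a : ℝ, 0 ≤ a → |ψ a| ≤ Cψ) →
      ∀ (x s : ℝ), 0 < x → 0 ≤ s →
      ‖r j x * (E j (x + s) * ψ (x + s))‖ ≤ Cψ * ‖ρ j 0 x‖ := by
    intro j ψ Cψ hψ x s hx hs
    have hx0 : (0:ℝ) ≤ x := hx.le
    have hxs : (0:ℝ) ≤ x + s := by linarith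
    have hEr : E j (x + s) ≤ E j x := hEratio j x s hx0 hs
    have hEx := hEpos j x
    have hExs := hEpos j (x + s)
    rw [Real.norm_eq_abs, Real.norm_eq_abs, hr]
    simp only
    rw [abs_mul, abs_div, abs_of_pos hEx, abs_mul, abs_of_pos hExs]
    calc |ρ j 0 x| / E j x * (E j (x + s) * |ψ (x + s)|)
        ≤ |ρ j 0 x| / E j x * (E j x * Cψ) := by
          apply mul_le_mul_of_nonneg_left ?_ (div_nonneg (abs_nonneg _) hEx.le)
          exact mul_le_mul hEr (hψ _ hxs) (abs_nonneg _) hEx.le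
      _ = Cψ * |ρ j 0 x| := by field_simp
  have hcontOnAux : ∀ j (ψ : ℝ → ℝ) (Cψ : ℝ), Continuous ψ →
      (∀ a : ℝ, 0 ≤ a → |ψ a| ≤ Cψ) →
      ContinuousOn (fun t => ∫ x in Set.Ioi (0:ℝ), r j x * (E j (x + t) * ψ (x + t)))
        (Set.Ici (0:ℝ)) := by
    intro j ψ Cψ hψc hψb t₀ ht₀
    apply MeasureTheory.continuousWithinAt_of_dominated
      (bound := fun x => Cψ * ‖ρ j 0 x‖)
    · apply Filter.Eventually.of_forall
      intro s
      exact ((hrcont j).mul (((hEcont j).comp (continuous_id.add continuous_const)).mul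
        (hψc.comp (continuous_id.add continuous_const)))).aestronglyMeasurable.restrict
    · filter_upwards [eventually_mem_nhdsWithin] with s hs
      filter_upwards [ae_restrict_mem measurableSet_Ioi] with x hx
      exact hrb j ψ Cψ hψb x s hx hs
    · exact ((hρL1 j 0 le_rfl).norm).const_mul Cψ
    · apply Filter.Eventually.of_forall
      intro x
      apply Continuous.continuousWithinAt
      exact continuous_const.mul (((hEcont j).comp (continuous_const.add continuous_id)).mul
        (hψc.comp (continuous_const.add continuous_id)))
  have hPcontOn : ∀ j, ContinuousOn (P j) (Set.Ici (0:ℝ)) := by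
    intro j
    simp only [hPdef]
    exact hcontOnAux j (φ j) (Cφ j) (hφreg j) (hCφ j)
  have hIgtcontOn : ∀ j, ContinuousOn (Igt j) (Set.Ici (0:ℝ)) := by
    intro j
    simp only [hIgtdef]
    exact hcontOnAux j (b j) (bmax j) (hb j) (hbmax j)
  -- definition of N and its integral equation
  set N : ℝ → ℝ := fun t => ∑ j, (H j t + P j t) with hNdef
  have hNcontOn : ContinuousOn N (Set.Ici (0:ℝ)) := by
    apply continuousOn_finset_sum
    intro j _
    exact ((hHcont j).continuousOn).add (hPcontOn j)
  have hIiH : ∀ j (t : ℝ), IntervalIntegrable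
      (fun s => m j s * φ j 0 + (lam * H j s - D j * Ile j s)) volume 0 t := by
    intro j t
    exact (((hmcont j).mul continuous_const).add
      ((continuous_const.mul (hHcont j)).sub
        (continuous_const.mul (hIlecont j)))).intervalIntegrable _ _
  have hIiP : ∀ j (t : ℝ), 0 ≤ t → IntervalIntegrable
      (fun s => lam * P j s - D j * Igt j s) volume 0 t := by
    intro j t ht
    apply ContinuousOn.intervalIntegrable
    rw [Set.uIcc_of_le ht]
    have hsub : Set.Icc (0:ℝ) t ⊆ Set.Ici 0 := fun x hx => hx.1
    exact (continuousOn_const.mul ((hPcontOn j).mono hsub)).sub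
      (continuousOn_const.mul ((hIgtcontOn j).mono hsub))
  have eqN : ∀ t : ℝ, 0 ≤ t → N t = N 0 + ∫ s in (0:ℝ)..t, lam * N s := by
    intro t ht
    have hH0 : ∀ j, H j 0 = 0 := by
      intro j; simp [hHdef]
    have hterm : ∀ j : Fin (n + 1), H j t + P j t = (H j 0 + P j 0)
        + ∫ s in (0:ℝ)..t, (m j s * φ j 0 + (lam * H j s - D j * Ile j s)
          + (lam * P j s - D j * Igt j s)) := by
      intro j
      rw [intervalIntegral.integral_add (hIiH j t) (hIiP j t ht)]
      rw [eqH j t ht]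
      have := eqP j t ht
      rw [hH0 j]
      linarith [this]
    calc N t = ∑ j, ((H j 0 + P j 0)
        + ∫ s in (0:ℝ)..t, (m j s * φ j 0 + (lam * H j s - D j * Ile j s)
          + (lam * P j s - D j * Igt j s))) := by
          rw [hNdef]
          exact Finset.sum_congr rfl (fun j _ => hterm j)
      _ = N 0 + ∑ j, ∫ s in (0:ℝ)..t, (m j s * φ j 0 + (lam * H j s - D j * Ile j s)
          + (lam * P j s - D j * Igt j s)) := by
          rw [Finset.sum_add_distrib, hNdef]
      _ = N 0 + ∫ s in (0:ℝ)..t, ∑ j, (m j s * φ j 0 + (lam * H j s - D j * Ile j s)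
          + (lam * P j s - D j * Igt j s)) := by
          congr 1
          rw [intervalIntegral.integral_finset_sum]
          intro j _
          exact (hIiH j t).add (hIiP j t ht)
      _ = N 0 + ∫ s in (0:ℝ)..t, lam * N s := by
          congr 1
          apply intervalIntegral.integral_congr
          intro s hs
          rw [Set.uIcc_of_le ht] at hs
          show ∑ j, (m j s * φ j 0 + (lam * H j s - D j * Ile j s)
            + (lam * P j s - D j * Igt j s)) = lam * N s
          have hcan := cancel s hs.1
          have hexp : ∑ j, (m j s * φ j 0 + (lam * H j s - D j * Ile j s)
              + (lam * P j s - D j * Igt j s))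
              = (∑ j, m j s * φ j 0) + ((∑ j, lam * (H j s + P j s))
                - ∑ j, D j * (Ile j s + Igt j s)) := by
            rw [← Finset.sum_sub_distrib, ← Finset.sum_add_distrib]
            apply Finset.sum_congr rfl
            intro j _
            ring
          rw [hexp, hcan]
          rw [hNdef, Finset.mul_sum]
          ring
  -- constancy of the exponentially-weighted dual pairing
  have hNmax : Continuous fun s : ℝ => N (max s 0) := by
    have := hNcontOn.comp_continuous (f := fun s : ℝ => max s 0)
      (continuous_id.max continuous_const) (fun x => Set.mem_Ici.mpr (le_max_right x 0))
    exact this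
  set R : ℝ → ℝ := fun t => ∫ s in (0:ℝ)..t, lam * N (max s 0) with hRdef
  have hRderiv : ∀ t : ℝ, HasDerivAt R (lam * N (max t 0)) t := by
    intro t
    exact ((continuous_const.mul hNmax).integral_hasStrictDerivAt 0 t).hasDerivAt
  have hRcont : Continuous R := by
    apply intervalIntegral.continuous_primitive
    exact fun a b' => (continuous_const.mul hNmax).intervalIntegrable a b'
  have hReq : ∀ t : ℝ, 0 ≤ t → N t = N 0 + R t := by
    intro t ht
    rw [eqN t ht, hRdef]
    congr 1
    apply intervalIntegral.integral_congr
    intro s hs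
    rw [Set.uIcc_of_le ht] at hs
    show lam * N s = lam * N (max s 0)
    rw [max_eq_left hs.1]
  have hZder : ∀ t : ℝ, 0 ≤ t →
      HasDerivAt (fun u => Real.exp (-(lam * u)) * (N 0 + R u)) 0 t := by
    intro t ht
    have h1 : HasDerivAt (fun u : ℝ => -(lam * u)) (-lam) t := by
      have h := ((hasDerivAt_id' t).const_mul lam).neg
      rw [mul_one] at h
      exact h
    have h2 : HasDerivAt (fun u : ℝ => Real.exp (-(lam * u)))
        (Real.exp (-(lam * t)) * (-lam)) t := h1.exp
    have h3 : HasDerivAt (fun u => N 0 + R u) (lam * N (max t 0)) t :=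
      (hRderiv t).const_add (N 0)
    have h4 := h2.mul h3
    refine h4.congr_deriv ?_
    rw [max_eq_left ht, ← hReq t ht]
    ring
  have key : ∀ t : ℝ, 0 ≤ t → Real.exp (-(lam * t)) * N t = N 0 := by
    intro t ht
    have hcont : ContinuousOn (fun u => Real.exp (-(lam * u)) * (N 0 + R u))
        (Set.Icc 0 t) := by
      apply Continuous.continuousOn
      exact (((continuous_const.mul continuous_id).neg).rexp).mul (continuous_const.add hRcont)
    have hder : ∀ x ∈ Set.Ico (0:ℝ) t,
        HasDerivWithinAt (fun u => Real.exp (-(lam * u)) * (N 0 + R u)) 0 (Set.Ici x) x :=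
      fun x hx => (hZder x hx.1).hasDerivWithinAt
    have := constant_of_has_deriv_right_zero hcont hder t (Set.mem_Icc.mpr ⟨ht, le_rfl⟩)
    have hR0 : R 0 = 0 := by simp [hRdef]
    rw [hR0] at this
    simp only [mul_zero, neg_zero, Real.exp_zero, one_mul, add_zero] at this
    rw [hReq t ht]
    exact this
  -- conclusion
  intro t ht
  have hIρφ : ∀ j, IntegrableOn (fun a => ρ j t a * φ j a) (Set.Ioi (0:ℝ)) :=
    fun j => hIψ j t ht (φ j) (Cφ j) (hφreg j) (hCφ j)
  have hIρhatφ : ∀ j, IntegrableOn (fun a => ρhat j a * φ j a) (Set.Ioi (0:ℝ)) := by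
    intro j
    refine Integrable.mono' (((hρhatL1 j).norm).mul_const (Cφ j)) ?_ ?_
    · exact ((hρhatreg j).mul (hφreg j)).aestronglyMeasurable.restrict
    · filter_upwards [ae_restrict_mem measurableSet_Ioi] with x hx
      rw [Real.norm_eq_abs, abs_mul]
      calc |ρhat j x| * |φ j x| ≤ |ρhat j x| * Cφ j :=
            mul_le_mul_of_nonneg_left (hCφ j x (le_of_lt hx)) (abs_nonneg _)
        _ = ‖ρhat j x‖ * Cφ j := by rw [Real.norm_eq_abs]
  have hterm : ∀ j : Fin (n + 1), ∫ a in Set.Ioi (0:ℝ),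
      (Real.exp (-(lam * t)) * ρ j t a - η * ρhat j a) * φ j a
      = Real.exp (-(lam * t)) * (∫ a in Set.Ioi (0:ℝ), ρ j t a * φ j a)
        - η * ∫ a in Set.Ioi (0:ℝ), ρhat j a * φ j a := by
    intro j
    rw [MeasureTheory.integral_congr_ae
      (g := fun a => Real.exp (-(lam * t)) * (ρ j t a * φ j a) - η * (ρhat j a * φ j a))
      (Filter.Eventually.of_forall fun a => by ring)]
    rw [MeasureTheory.integral_sub ((hIρφ j).const_mul _) ((hIρhatφ j).const_mul _),
      MeasureTheory.integral_const_mul, MeasureTheory.integral_const_mul]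
  have hsplitφ : ∀ j : Fin (n + 1),
      ∫ a in Set.Ioi (0:ℝ), ρ j t a * φ j a = H j t + P j t := by
    intro j
    simp only [hHdef, hPdef]
    exact split j (φ j) (Cφ j) (hφreg j) (hCφ j) t ht
  have hN0 : N 0 = η := by
    have hP0 : ∀ j : Fin (n + 1), P j 0 = ∫ a in Set.Ioi (0:ℝ), ρ j 0 a * φ j a := by
      intro j
      simp only [hPdef]
      apply MeasureTheory.integral_congr_ae
      apply Filter.Eventually.of_forall
      intro x
      have hEx := (hEpos j x).ne'
      rw [hr]
      simp only [add_zero]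
      field_simp
    rw [hNdef, hη]
    simp only
    apply Finset.sum_congr rfl
    intro j _
    rw [hP0 j]
    have : H j 0 = 0 := by simp [hHdef]
    rw [this, zero_add]
  calc ∑ j, ∫ a in Set.Ioi (0:ℝ),
      (Real.exp (-(lam * t)) * ρ j t a - η * ρhat j a) * φ j a
      = ∑ j, (Real.exp (-(lam * t)) * (∫ a in Set.Ioi (0:ℝ), ρ j t a * φ j a)
        - η * ∫ a in Set.Ioi (0:ℝ), ρhat j a * φ j a) :=
        Finset.sum_congr rfl (fun j _ => hterm j)
    _ = Real.exp (-(lam * t)) * (∑ j, ∫ a in Set.Ioi (0:ℝ), ρ j t a * φ j a)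
        - η * ∑ j, ∫ a in Set.Ioi (0:ℝ), ρhat j a * φ j a := by
        rw [Finset.sum_sub_distrib, ← Finset.mul_sum, ← Finset.mul_sum]
    _ = Real.exp (-(lam * t)) * N t - η * 1 := by
        rw [hnorm]
        congr 2
        rw [hNdef]
        exact Finset.sum_congr rfl (fun j _ => hsplitφ j)
    _ = 0 := by
        rw [key t ht, hN0]
        ring
end
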